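/- arXiv:2006.07705 — 5 statements merged into one kernel-verified Lean document; each statement's English description precedes it below -/
import Mathlib

section
/- For every positive integer n, the number of partitions of n with non-negative rank satisfies N(n) ≤ p(n-1), where the rank of a partition is its largest part minus its number of parts. -/
open PowerSeries Finset

noncomputable instance : TopologicalSpace (PowerSeries ℚ) :=
  inferInstanceAs (TopologicalSpace ((Unit →₀ ℕ) → ℚ))

/-- The rank of a partition: largest part minus number of parts. -/
def rank {n : ℕ} (P : n.Partition) : ℤ :=
  (P.parts.sup : ℤ) - (Multiset.card P.parts : ℤ)

/-- The crank of a partition. -/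
def crank {n : ℕ} (P : n.Partition) : ℤ :=
  if P.parts.count 1 = 0 then (P.parts.sup : ℤ)
  else ((P.parts.filter (fun x => P.parts.count 1 < x)).card : ℤ) - (P.parts.count 1 : ℤ)

/-- The number of partitions of `n`. -/
noncomputable def p (n : ℕ) : ℕ := Nat.card n.Partition

/-- `p` extended to the integers by `0` on negatives. -/
noncomputable def pz (m : ℤ) : ℕ := if 0 ≤ m then p m.toNat else 0

/-- The number of partitions of `n` with non-negative rank. -/
noncomputable def Nrank (n : ℕ) : ℕ := Nat.card {P : n.Partition // 0 ≤ rank P}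

/-- The number of partitions of `n` with positive rank. -/
noncomputable def Rrank (n : ℕ) : ℕ := Nat.card {P : n.Partition // 0 < rank P}

/-- The number of Garden of Eden partitions of `n` (rank at most `-2`). -/
noncomputable def gePart (n : ℕ) : ℕ := Nat.card {P : n.Partition // rank P ≤ -2}

/-- The number of partitions of `n` with non-negative crank. -/
noncomputable def Ccrank (n : ℕ) : ℕ := Nat.card {P : n.Partition // 0 ≤ crank P}

/-- The number of partitions of `n` with positive crank. -/
noncomputable def Dcrank (n : ℕ) : ℕ := Nat.card {P : n.Partition // 0 < crank P}

/-- The number of partitions of `n` in which `k` is the least positive integer that is not a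
part and there are more parts greater than `k` than parts less than `k`. -/
noncomputable def Mk (k n : ℕ) : ℕ := Nat.card {P : n.Partition //
  (∀ i, 1 ≤ i → i < k → (i : ℕ) ∈ P.parts) ∧ (k : ℕ) ∉ P.parts ∧
  (P.parts.filter (fun x => x < k)).card < (P.parts.filter (fun x => k < x)).card}

/-- The number of partitions of `n` with no part divisible by 3. -/
noncomputable def p3 (n : ℕ) : ℕ := Nat.card {P : n.Partition // ∀ x ∈ P.parts, ¬ (3 ∣ x)}

/-- The infinite product `(q;q)_∞` as a formal power series. -/
noncomputable def E : PowerSeries ℚ := ∏' i : ℕ, (1 - (X : PowerSeries ℚ) ^ (i + 1))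

/-- The finite product `(q;q)_n` as a formal power series. -/
noncomputable def qPoch (n : ℕ) : PowerSeries ℚ :=
  ∏ i ∈ range n, (1 - (X : PowerSeries ℚ) ^ (i + 1))

lemma multiset_sup_mem (s : Multiset ℕ) (hs : s ≠ 0) : s.sup ∈ s := by
  induction s using Multiset.induction with
  | empty => simp at hs
  | cons a t ih =>
    rw [Multiset.sup_cons]
    rcases eq_or_ne t 0 with rfl | ht
    · simp
    · rcases le_total a t.sup with h | h
      · rw [sup_eq_right.mpr h]; exact Multiset.mem_cons_of_mem (ih ht)
      · rw [sup_eq_left.mpr h]; exact Multiset.mem_cons_self a t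

section
variable {n : ℕ} (hn : 0 < n)
include hn

lemma parts_ne_zero (P : n.Partition) : P.parts ≠ 0 := by
  intro h
  have := P.parts_sum
  rw [h] at this
  simp at this
  omega

lemma sup_mem_parts (P : n.Partition) : P.parts.sup ∈ P.parts :=
  multiset_sup_mem _ (parts_ne_zero hn P)

lemma facts (P : n.Partition) (hP : 0 ≤ rank P) :
    Multiset.card P.parts ≤ P.parts.sup ∧ P.parts.sup ≤ n ∧ 1 ≤ Multiset.card P.parts := by
  refine ⟨?_, ?_, ?_⟩
  · have := hP; unfold rank at this; omega
  · have := Multiset.single_le_sum (fun x _ => Nat.zero_le x) _ (sup_mem_parts hn P)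
    rwa [P.parts_sum] at this
  · exact Multiset.card_pos.2 (parts_ne_zero hn P)

/-- The image multiset: remove the largest part `a`, add 1 to every other part,
and append `a - k` parts equal to `1`. -/
def fm (P : n.Partition) : Multiset ℕ :=
  ((P.parts.erase P.parts.sup).map (· + 1)) +
    Multiset.replicate (P.parts.sup - Multiset.card P.parts) 1

lemma fm_sum (P : n.Partition) (hP : 0 ≤ rank P) : (fm P).sum = n - 1 := by
  obtain ⟨h1, h2, h3⟩ := facts hn P hP
  have hmem := sup_mem_parts hn P
  have hcons := Multiset.cons_erase hmem
  have hsum : P.parts.sup + (P.parts.erase P.parts.sup).sum = n := by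
    have := P.parts_sum
    rw [← hcons, Multiset.sum_cons] at this
    exact this
  have hcard : Multiset.card (P.parts.erase P.parts.sup) = Multiset.card P.parts - 1 := by
    rw [Multiset.card_erase_of_mem hmem, Nat.pred_eq_sub_one]
  unfold fm
  rw [Multiset.sum_add, Multiset.sum_replicate, smul_eq_mul, mul_one]
  have hmap : ((P.parts.erase P.parts.sup).map (· + 1)).sum =
      (P.parts.erase P.parts.sup).sum + Multiset.card (P.parts.erase P.parts.sup) := by
    induction (P.parts.erase P.parts.sup) using Multiset.induction with
    | empty => simp
    | cons a t ih => simp [ih]; ring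
  rw [hmap, hcard]
  omega

omit hn in
lemma fm_pos (P : n.Partition) : ∀ x ∈ fm P, 0 < x := by
  intro x hx
  unfold fm at hx
  rw [Multiset.mem_add] at hx
  rcases hx with hx | hx
  · obtain ⟨y, _, rfl⟩ := Multiset.mem_map.mp hx; omega
  · rw [Multiset.eq_of_mem_replicate hx]; norm_num

lemma fm_card (P : n.Partition) (hP : 0 ≤ rank P) :
    Multiset.card (fm P) = P.parts.sup - 1 := by
  obtain ⟨h1, h2, h3⟩ := facts hn P hP
  unfold fm
  rw [Multiset.card_add, Multiset.card_map, Multiset.card_replicate,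
    Multiset.card_erase_of_mem (sup_mem_parts hn P), Nat.pred_eq_sub_one]
  omega

omit hn in
lemma fm_recover (P : n.Partition) :
    ((fm P).map (· - 1)).filter (fun x => 0 < x) = P.parts.erase P.parts.sup := by
  unfold fm
  rw [Multiset.map_add, Multiset.filter_add, Multiset.map_map]
  have h1 : (P.parts.erase P.parts.sup).map ((· - 1) ∘ (· + 1)) = P.parts.erase P.parts.sup := by
    rw [show ((· - 1) ∘ (· + 1) : ℕ → ℕ) = id by funext x; simp, Multiset.map_id]
  rw [h1]
  have h2 : (Multiset.replicate (P.parts.sup - Multiset.card P.parts) 1).map (· - 1) =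
      Multiset.replicate (P.parts.sup - Multiset.card P.parts) 0 := by
    rw [Multiset.map_replicate]
  rw [h2]
  have h3 : Multiset.filter (fun x => 0 < x)
      (Multiset.replicate (P.parts.sup - Multiset.card P.parts) (0:ℕ)) = 0 := by
    rw [Multiset.filter_eq_nil]
    intro a ha
    rw [Multiset.eq_of_mem_replicate ha]; omega
  rw [h3, add_zero, Multiset.filter_eq_self]
  intro a ha
  exact P.parts_pos (Multiset.mem_of_mem_erase ha)

noncomputable def fP (P : {P : n.Partition // 0 ≤ rank P}) : (n - 1).Partition :=
  ⟨fm P.1, fun {x} hx => fm_pos P.1 x hx, fm_sum hn P.1 P.2⟩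

lemma fP_inj : Function.Injective (fP hn) := by
  intro P Q h
  have hparts : fm P.1 = fm Q.1 := congrArg Nat.Partition.parts h
  obtain ⟨hP1, hP2, hP3⟩ := facts hn P.1 P.2
  obtain ⟨hQ1, hQ2, hQ3⟩ := facts hn Q.1 Q.2
  have hsup : P.1.parts.sup = Q.1.parts.sup := by
    have := fm_card hn P.1 P.2
    rw [hparts, fm_card hn Q.1 Q.2] at this
    omega
  have herase : P.1.parts.erase P.1.parts.sup = Q.1.parts.erase Q.1.parts.sup := by
    rw [← fm_recover P.1, ← fm_recover Q.1, hparts]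
  have : P.1.parts = Q.1.parts := by
    rw [← Multiset.cons_erase (sup_mem_parts hn P.1), herase, hsup,
        Multiset.cons_erase (sup_mem_parts hn Q.1)]
  exact Subtype.ext (Nat.Partition.ext this)

end

theorem stmt0 (n : ℕ) (hn : 0 < n) : Nrank n ≤ p (n - 1) :=
  Nat.card_le_card_of_injective (fP hn) (fP_inj hn)
end

section
/- For every positive integer n, the number of partitions of n with non-negative rank satisfies N(n) ≥ p(n-1) - p(n-5). -/
open PowerSeries Finset

namespace PfAux

open Multiset


/-- Number of parts of `s` exceeding `j` (the `j`-th column length of the Young diagram). -/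
def colQ (s : Multiset ℕ) (j : ℕ) : ℕ := s.countP (fun x => j < x)

/-- Conjugate partition (as a multiset of column lengths). -/
def mconj (s : Multiset ℕ) : Multiset ℕ := (Multiset.range s.sup).map (fun j => colQ s j)

lemma colQ_anti {s : Multiset ℕ} {i j : ℕ} (h : i ≤ j) : colQ s j ≤ colQ s i := by
  unfold colQ
  rw [countP_eq_card_filter, countP_eq_card_filter]
  exact card_le_card (monotone_filter_right s (fun x hx => lt_of_le_of_lt h hx))

lemma colQ_eq_zero_iff {s : Multiset ℕ} {j : ℕ} : colQ s j = 0 ↔ s.sup ≤ j := by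
  unfold colQ
  rw [countP_eq_zero]
  constructor
  · intro h
    exact Multiset.sup_le.2 (fun x hx => le_of_not_gt (h x hx))
  · intro h x hx
    exact not_lt.2 (le_trans (Multiset.le_sup hx) h)

lemma colQ_range_card {s : Multiset ℕ} {i : ℕ} :
    colQ (mconj s) i = ((Finset.range s.sup).filter (fun m => i < colQ s m)).card := by
  unfold mconj colQ
  rw [countP_map]
  rfl

lemma colQ_mconj (s : Multiset ℕ) (i j : ℕ) : j < colQ (mconj s) i ↔ i < colQ s j := by
  rw [colQ_range_card]
  constructor
  · intro h
    by_contra hc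
    push_neg at hc
    have hsub : (Finset.range s.sup).filter (fun m => i < colQ s m) ⊆ Finset.range j := by
      intro m hm
      simp only [Finset.mem_filter, Finset.mem_range] at hm ⊢
      by_contra hmj
      push_neg at hmj
      exact absurd (lt_of_le_of_lt hc hm.2) (not_lt.2 (colQ_anti hmj))
    have := Finset.card_le_card hsub
    rw [Finset.card_range] at this
    omega
  · intro h
    have hjsup : j < s.sup := by
      by_contra hc
      push_neg at hc
      have := colQ_eq_zero_iff.2 hc
      omega
    have hsub : Finset.range (j+1) ⊆ (Finset.range s.sup).filter (fun m => i < colQ s m) := by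
      intro m hm
      simp only [Finset.mem_range] at hm
      simp only [Finset.mem_filter, Finset.mem_range]
      exact ⟨lt_of_lt_of_le hm hjsup, lt_of_lt_of_le h (colQ_anti (by omega))⟩
    have := Finset.card_le_card hsub
    rw [Finset.card_range] at this
    omega

lemma colQ_succ_add (s : Multiset ℕ) (j : ℕ) : colQ s j = colQ s (j+1) + s.count (j+1) := by
  induction s using Multiset.induction_on with
  | empty => simp [colQ]
  | cons a s ih =>
    unfold colQ at *
    rw [countP_cons, countP_cons, count_cons]
    have : (if j + 1 = a then 1 else 0) + (if j + 1 < a then 1 else 0) = if j < a then 1 else 0 := by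
      split <;> split <;> split <;> omega
    omega

lemma mconj_pos {s : Multiset ℕ} {y : ℕ} (hy : y ∈ mconj s) : 0 < y := by
  unfold mconj at hy
  rw [Multiset.mem_map] at hy
  obtain ⟨j, hj, rfl⟩ := hy
  rw [Multiset.mem_range] at hj
  have := colQ_eq_zero_iff (s := s) (j := j)
  omega

lemma mconj_card (s : Multiset ℕ) : Multiset.card (mconj s) = s.sup := by
  simp [mconj]

lemma mconj_sup {s : Multiset ℕ} (hs : ∀ x ∈ s, 0 < x) : (mconj s).sup = Multiset.card s := by
  have hQ0 : colQ s 0 = Multiset.card s := by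
    unfold colQ
    rw [Multiset.countP_eq_card]
    · intro x hx; exact hs x hx
  rcases eq_or_ne s 0 with rfl | hne
  · simp [mconj]
  · apply le_antisymm
    · apply Multiset.sup_le.2
      intro y hy
      unfold mconj at hy
      rw [Multiset.mem_map] at hy
      obtain ⟨j, _, rfl⟩ := hy
      rw [← hQ0]
      exact colQ_anti (Nat.zero_le j)
    · apply Multiset.le_sup
      unfold mconj
      rw [Multiset.mem_map]
      refine ⟨0, ?_, hQ0⟩
      rw [Multiset.mem_range]
      obtain ⟨x, hx⟩ := Multiset.exists_mem_of_ne_zero hne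
      exact lt_of_lt_of_le (hs x hx) (Multiset.le_sup hx)

lemma mconj_sum (s : Multiset ℕ) : (mconj s).sum = s.sum := by
  have key : ∀ (N : ℕ) (t : Multiset ℕ), (∀ x ∈ t, x ≤ N) →
      ((Multiset.range N).map (fun j => colQ t j)).sum = t.sum := by
    intro N t
    induction t using Multiset.induction_on with
    | empty => intro _; simp [colQ]
    | cons a t ih =>
      intro hle
      have ha : a ≤ N := hle a (mem_cons_self a t)
      have hcolQ : ∀ j, colQ (a ::ₘ t) j = colQ t j + (if j < a then 1 else 0) := by
        intro j; unfold colQ; rw [countP_cons]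
      calc ((Multiset.range N).map (fun j => colQ (a ::ₘ t) j)).sum
          = ((Multiset.range N).map (fun j => colQ t j + (if j < a then 1 else 0))).sum := by
            simp only [hcolQ]
        _ = ((Multiset.range N).map (fun j => colQ t j)).sum
            + ((Multiset.range N).map (fun j => if j < a then 1 else 0)).sum := by
            rw [← Multiset.sum_map_add]
        _ = t.sum + a := by
            rw [ih (fun x hx => hle x (mem_cons_of_mem hx))]
            congr 1
            have : ((Multiset.range N).map (fun j => if j < a then 1 else 0)).sum
                = (Multiset.range N).countP (fun j => j < a) := by
              rw [countP_eq_card_filter]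
              induction (Multiset.range N) using Multiset.induction_on with
              | empty => simp
              | cons b u ihu =>
                rw [Multiset.map_cons, Multiset.sum_cons, Multiset.filter_cons]
                split <;> simp_all [Nat.add_comm]
            rw [this]
            rw [countP_eq_card_filter]
            have : Multiset.filter (fun j => j < a) (Multiset.range N)
                = ((Finset.range N).filter (fun j => j < a)).val := by
              rw [Finset.filter_val, Finset.range_val]
            rw [this]
            have : (Finset.range N).filter (fun j => j < a) = Finset.range a := by
              ext m; simp only [Finset.mem_filter, Finset.mem_range]; omega
            rw [this, Finset.range_val, Multiset.card_range]
        _ = (a ::ₘ t).sum := by rw [Multiset.sum_cons]; omega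
  exact key s.sup s (fun x hx => Multiset.le_sup hx)

lemma mconj_mconj {s : Multiset ℕ} (hs : ∀ x ∈ s, 0 < x) : mconj (mconj s) = s := by
  have hQ : ∀ i, colQ (mconj (mconj s)) i = colQ s i := by
    intro i
    have h : ∀ j, j < colQ (mconj (mconj s)) i ↔ j < colQ s i := by
      intro j
      rw [colQ_mconj, colQ_mconj]
    by_contra hne
    rcases Nat.lt_or_ge (colQ (mconj (mconj s)) i) (colQ s i) with hlt | hge
    · exact absurd ((h _).2 hlt) (lt_irrefl _)
    · have hlt : colQ s i < colQ (mconj (mconj s)) i := lt_of_le_of_ne hge (fun e => hne e.symm)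
      exact absurd ((h _).1 hlt) (lt_irrefl _)
  ext a
  rcases a with _ | j
  · have h1 : (0 : ℕ) ∉ mconj (mconj s) := fun h => absurd (mconj_pos h) (lt_irrefl 0)
    have h2 : (0 : ℕ) ∉ s := fun h => absurd (hs 0 h) (lt_irrefl 0)
    rw [count_eq_zero.2 h1, count_eq_zero.2 h2]
  · have e1 := colQ_succ_add (mconj (mconj s)) j
    have e2 := colQ_succ_add s j
    have := hQ j
    have := hQ (j+1)
    omega

lemma mconj_inj {s t : Multiset ℕ} (hs : ∀ x ∈ s, 0 < x) (ht : ∀ x ∈ t, 0 < x)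
    (h : mconj s = mconj t) : s = t := by
  rw [← mconj_mconj hs, ← mconj_mconj ht, h]

lemma sup_mem_of_ne_zero {s : Multiset ℕ} (hs : s ≠ 0) : s.sup ∈ s := by
  induction s using Multiset.induction_on with
  | empty => exact absurd rfl hs
  | cons a t ih =>
    rw [Multiset.sup_cons]
    rcases eq_or_ne t 0 with rfl | hne
    · simp
    · rcases le_total t.sup a with h | h
      · rw [max_eq_left h]; exact mem_cons_self a t
      · rw [max_eq_right h]; exact mem_cons_of_mem (ih hne)




lemma sup_eq_zero_iff {s : Multiset ℕ} (hs : ∀ x ∈ s, 0 < x) : s.sup = 0 ↔ s = 0 := by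
  constructor
  · intro h
    by_contra hne
    obtain ⟨x, hx⟩ := Multiset.exists_mem_of_ne_zero hne
    have := hs x hx
    have := Multiset.le_sup hx
    omega
  · rintro rfl; rfl

lemma card_le_sum {s : Multiset ℕ} (hs : ∀ x ∈ s, 0 < x) : Multiset.card s ≤ s.sum := by
  induction s using Multiset.induction_on with
  | empty => simp
  | cons a t ih =>
    rw [Multiset.card_cons, Multiset.sum_cons]
    have h1 := hs a (mem_cons_self a t)
    have h2 := ih (fun x hx => hs x (mem_cons_of_mem hx))
    omega

lemma sum_map_pred {s : Multiset ℕ} (hs : ∀ x ∈ s, 0 < x) :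
    (s.map (· - 1)).sum = s.sum - Multiset.card s := by
  induction s using Multiset.induction_on with
  | empty => simp
  | cons a t ih =>
    rw [Multiset.map_cons, Multiset.sum_cons, Multiset.sum_cons, Multiset.card_cons]
    have h1 := hs a (mem_cons_self a t)
    have h2 := ih (fun x hx => hs x (mem_cons_of_mem hx))
    have h3 := card_le_sum (fun x hx => hs x (mem_cons_of_mem hx))
    omega

lemma sum_filter_pos (s : Multiset ℕ) : (s.filter (fun x => 0 < x)).sum = s.sum := by
  induction s using Multiset.induction_on with
  | empty => simp
  | cons a t ih =>
    rw [Multiset.filter_cons, Multiset.sum_add, ih, Multiset.sum_cons]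
    by_cases h : 0 < a
    · rw [if_pos h, Multiset.sum_singleton]
    · rw [if_neg h, Multiset.sum_zero]
      omega

/-! The A map : add 1 to one copy of the largest part. -/

def Aparts (s : Multiset ℕ) : Multiset ℕ := (s.sup + 1) ::ₘ s.erase s.sup

lemma Apos {s : Multiset ℕ} (hs : ∀ x ∈ s, 0 < x) : ∀ x ∈ Aparts s, 0 < x := by
  intro x hx
  rw [Aparts, Multiset.mem_cons] at hx
  rcases hx with rfl | hx
  · omega
  · exact hs x (Multiset.mem_of_mem_erase hx)

lemma Asum {s : Multiset ℕ} (hs : ∀ x ∈ s, 0 < x) : (Aparts s).sum = s.sum + 1 := by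
  rcases eq_or_ne s 0 with rfl | hne
  · simp [Aparts]
  · have hmem := sup_mem_of_ne_zero hne
    rw [Aparts, Multiset.sum_cons]
    have : s.sup + (s.erase s.sup).sum = s.sum := by
      rw [← Multiset.sum_cons, Multiset.cons_erase hmem]
    omega

lemma Asup (s : Multiset ℕ) : (Aparts s).sup = s.sup + 1 := by
  rw [Aparts, Multiset.sup_cons]
  have : (s.erase s.sup).sup ≤ s.sup :=
    Multiset.sup_le.2 fun x hx => Multiset.le_sup (Multiset.mem_of_mem_erase hx)
  omega

lemma Acount (s : Multiset ℕ) : (Aparts s).count (s.sup + 1) = 1 := by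
  rw [Aparts, Multiset.count_cons_self]
  have h1 : s.sup + 1 ∉ s.erase s.sup := by
    intro h
    have := Multiset.le_sup (Multiset.mem_of_mem_erase h)
    omega
  rw [Multiset.count_eq_zero.2 h1]

lemma Acard {s : Multiset ℕ} (hne : s ≠ 0) :
    Multiset.card (Aparts s) = Multiset.card s := by
  rw [Aparts, Multiset.card_cons, Multiset.card_erase_of_mem (sup_mem_of_ne_zero hne),
    Nat.pred_eq_sub_one]
  have : Multiset.card s ≠ 0 := by simpa using hne
  omega

lemma Arank {s : Multiset ℕ} (hs : ∀ x ∈ s, 0 < x)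
    (hr : (-1 : ℤ) ≤ (s.sup : ℤ) - Multiset.card s) :
    (0 : ℤ) ≤ ((Aparts s).sup : ℤ) - Multiset.card (Aparts s) := by
  rcases eq_or_ne s 0 with rfl | hne
  · simp [Aparts]
  · rw [Asup, Acard hne]
    omega

lemma A_inj {s t : Multiset ℕ} (hs : ∀ x ∈ s, 0 < x) (ht : ∀ x ∈ t, 0 < x)
    (h : Aparts s = Aparts t) : s = t := by
  have hsup : s.sup = t.sup := by
    have := Asup s
    have := Asup t
    rw [h] at *
    omega
  have herase : s.erase s.sup = t.erase t.sup := by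
    have h' := h
    rw [Aparts, Aparts, hsup, Multiset.cons_inj_right] at h'
    rw [hsup]
    exact h'
  rcases eq_or_ne s 0 with rfl | hne
  · have : t.sup = 0 := by rw [← hsup]; rfl
    exact ((sup_eq_zero_iff ht).1 this).symm
  · have hne' : t ≠ 0 := by
      intro h0
      rw [h0] at hsup
      exact hne ((sup_eq_zero_iff hs).1 (by simpa using hsup))
    have h1 := Multiset.cons_erase (sup_mem_of_ne_zero hne)
    have h2 := Multiset.cons_erase (sup_mem_of_ne_zero hne')
    rw [← h1, ← h2, herase, hsup]

/-! The B map : for rank = -2, conjugate after removing the largest part,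
then add a new largest part. -/

def Bparts (s : Multiset ℕ) : Multiset ℕ :=
  (Multiset.card s - 1) ::ₘ mconj (s.erase s.sup)

section B

variable {s : Multiset ℕ} (hs : ∀ x ∈ s, 0 < x) (hk : Multiset.card s = s.sup + 2)

include hs hk

lemma Bne : s ≠ 0 := by
  intro h
  rw [h] at hk
  simp at hk

lemma Bsup_pos : 1 ≤ s.sup := by
  by_contra h
  push_neg at h
  have h0 : s.sup = 0 := by omega
  have := (sup_eq_zero_iff hs).1 h0
  rw [this] at hk
  simp at hk

lemma Berase_card : Multiset.card (s.erase s.sup) = s.sup + 1 := by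
  rw [Multiset.card_erase_of_mem (sup_mem_of_ne_zero (Bne hs hk)), hk,
    Nat.pred_eq_sub_one]
  omega

lemma Berase_pos : ∀ x ∈ s.erase s.sup, 0 < x := fun x hx => hs x (Multiset.mem_of_mem_erase hx)

lemma Berase_ne : s.erase s.sup ≠ 0 := by
  intro h
  have := Berase_card hs hk
  rw [h] at this
  simp at this

lemma Berase_sup_le : (s.erase s.sup).sup ≤ s.sup :=
  Multiset.sup_le.2 fun x hx => Multiset.le_sup (Multiset.mem_of_mem_erase hx)

lemma Bmconj_sup : (mconj (s.erase s.sup)).sup = s.sup + 1 := by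
  rw [mconj_sup (Berase_pos hs hk), Berase_card hs hk]

lemma Bpos : ∀ x ∈ Bparts s, 0 < x := by
  intro x hx
  rw [Bparts, Multiset.mem_cons] at hx
  rcases hx with rfl | hx
  · omega
  · exact mconj_pos hx

lemma Bsum : (Bparts s).sum = s.sum + 1 := by
  rw [Bparts, Multiset.sum_cons, mconj_sum]
  have hsum : s.sup + (s.erase s.sup).sum = s.sum := by
    rw [← Multiset.sum_cons, Multiset.cons_erase (sup_mem_of_ne_zero (Bne hs hk))]
  omega

lemma Bsup : (Bparts s).sup = Multiset.card s - 1 := by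
  rw [Bparts, Multiset.sup_cons, Bmconj_sup hs hk]
  omega

lemma Bcard : Multiset.card (Bparts s) = 1 + (s.erase s.sup).sup := by
  rw [Bparts, Multiset.card_cons, mconj_card]
  omega

lemma Brank : (0 : ℤ) ≤ ((Bparts s).sup : ℤ) - Multiset.card (Bparts s) := by
  rw [Bsup hs hk, Bcard hs hk, hk]
  have h1 : (s.erase s.sup).sup ≤ s.sup :=
    Multiset.sup_le.2 fun x hx => Multiset.le_sup (Multiset.mem_of_mem_erase hx)
  have e : s.sup + 2 - 1 = s.sup + 1 := by omega
  rw [e]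
  push_cast
  omega

lemma Bcount : 2 ≤ (Bparts s).count (Multiset.card s - 1) := by
  rw [Bparts, Multiset.count_cons_self]
  have hne : mconj (s.erase s.sup) ≠ 0 := by
    intro h
    have := mconj_card (s.erase s.sup)
    rw [h] at this
    have h2 := Bsup_pos hs hk
    have h3 : (s.erase s.sup).sup = 0 := by simpa using this.symm
    have := (sup_eq_zero_iff (Berase_pos hs hk)).1 h3
    exact (Berase_ne hs hk) this
  have hmem : (Multiset.card s - 1) ∈ mconj (s.erase s.sup) := by
    have := sup_mem_of_ne_zero hne
    rwa [Bmconj_sup hs hk, show s.sup + 1 = Multiset.card s - 1 by omega] at this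
  have := Multiset.one_le_count_iff_mem.2 hmem
  omega

end B

lemma B_inj {s t : Multiset ℕ} (hs : ∀ x ∈ s, 0 < x) (hks : Multiset.card s = s.sup + 2)
    (ht : ∀ x ∈ t, 0 < x) (hkt : Multiset.card t = t.sup + 2)
    (h : Bparts s = Bparts t) : s = t := by
  have hsup : (Bparts s).sup = (Bparts t).sup := by rw [h]
  rw [Bsup hs hks, Bsup ht hkt] at hsup
  have hcard : Multiset.card s = Multiset.card t := by
    have h1 := Bsup_pos hs hks
    have h2 := Bsup_pos ht hkt
    omega
  have hsupeq : s.sup = t.sup := by omega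
  rw [Bparts, Bparts, ← hcard] at h
  rw [Multiset.cons_inj_right] at h
  have := mconj_inj (Berase_pos hs hks) (Berase_pos ht hkt) h
  have h1 := Multiset.cons_erase (sup_mem_of_ne_zero (Bne hs hks))
  have h2 := Multiset.cons_erase (sup_mem_of_ne_zero (Bne ht hkt))
  rw [← h1, ← h2, this, hsupeq]

lemma AB_disjoint {s t : Multiset ℕ} (hs : ∀ x ∈ s, 0 < x)
    (ht : ∀ x ∈ t, 0 < x) (hkt : Multiset.card t = t.sup + 2)
    (h : Aparts s = Bparts t) : False := by
  have hsup : (Aparts s).sup = (Bparts t).sup := by rw [h]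
  rw [Asup, Bsup ht hkt] at hsup
  have h1 := Acount s
  rw [h, hsup] at h1
  have h2 := Bcount ht hkt
  omega


def Cparts (s : Multiset ℕ) : Multiset ℕ :=
  ((Multiset.card s - 4) ::ₘ s.map (fun x => x - 1)).filter (fun x => 0 < x)

lemma shift_filter (s : Multiset ℕ) :
    ((s.map (fun x => x - 1)).filter (fun x => 0 < x)).map (fun x => x + 1)
      = s.filter (fun x => 1 < x) := by
  induction s using Multiset.induction_on with
  | empty => simp
  | cons a u ih =>
    rw [Multiset.map_cons, Multiset.filter_cons, Multiset.filter_cons, Multiset.map_add, ih]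
    by_cases h : (1 : ℕ) < a
    · rw [if_pos (by omega : (0:ℕ) < a - 1), if_pos h]
      have : a - 1 + 1 = a := by omega
      simp [this]
    · rw [if_neg (by omega : ¬ (0:ℕ) < a - 1), if_neg h]
      simp

section C

variable {s : Multiset ℕ} (hs : ∀ x ∈ s, 0 < x) (hk : s.sup + 3 ≤ Multiset.card s)

include hs hk

lemma Ccard4 : 4 ≤ Multiset.card s := by
  have hne : s ≠ 0 := by
    intro h
    rw [h] at hk
    simp at hk
  have : s.sup ≠ 0 := fun h0 => hne ((sup_eq_zero_iff hs).1 h0)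
  omega

omit hs hk in
lemma Cpos : ∀ x ∈ Cparts s, 0 < x := by
  intro x hx
  exact (Multiset.mem_filter.1 hx).2

lemma Csum : (Cparts s).sum = s.sum - 4 := by
  rw [Cparts, sum_filter_pos, Multiset.sum_cons, sum_map_pred hs]
  have h1 := card_le_sum hs
  have h2 := Ccard4 hs hk
  omega

lemma Csum' : (Cparts s).sum + 4 = s.sum := by
  rw [Csum hs hk]
  have h1 := card_le_sum hs
  have h2 := Ccard4 hs hk
  omega

lemma Csup : (Cparts s).sup = Multiset.card s - 4 := by
  apply le_antisymm
  · apply Multiset.sup_le.2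
    intro x hx
    rw [Cparts, Multiset.mem_filter, Multiset.mem_cons] at hx
    rcases hx.1 with rfl | hmem
    · exact le_refl _
    · rw [Multiset.mem_map] at hmem
      obtain ⟨y, hy, rfl⟩ := hmem
      have := Multiset.le_sup hy
      omega
  · by_cases h : 5 ≤ Multiset.card s
    · apply Multiset.le_sup
      rw [Cparts, Multiset.mem_filter, Multiset.mem_cons]
      exact ⟨Or.inl rfl, by omega⟩
    · have := Ccard4 hs hk
      have : Multiset.card s = 4 := by omega
      rw [this]
      exact Nat.zero_le _

end C

lemma replicate_split {s : Multiset ℕ} (hs : ∀ x ∈ s, 0 < x) :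
    s = s.filter (fun x => 1 < x)
      + Multiset.replicate (Multiset.card s - Multiset.card (s.filter (fun x => 1 < x))) 1 := by
  have hsplit := (Multiset.filter_add_not (fun x => 1 < x) s).symm
  have hrep : s.filter (fun x => ¬ 1 < x)
      = Multiset.replicate (Multiset.card (s.filter (fun x => ¬ 1 < x))) 1 := by
    rw [Multiset.eq_replicate]
    refine ⟨rfl, ?_⟩
    intro b hb
    rw [Multiset.mem_filter] at hb
    have := hs b hb.1
    omega
  have hcard : Multiset.card (s.filter (fun x => ¬ 1 < x))
      = Multiset.card s - Multiset.card (s.filter (fun x => 1 < x)) := by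
    have := congrArg Multiset.card (Multiset.filter_add_not (fun x => 1 < x) s)
    rw [Multiset.card_add] at this
    omega
  rw [← hcard, ← hrep]
  exact hsplit

lemma C_inj {s t : Multiset ℕ} (hs : ∀ x ∈ s, 0 < x) (hks : s.sup + 3 ≤ Multiset.card s)
    (ht : ∀ x ∈ t, 0 < x) (hkt : t.sup + 3 ≤ Multiset.card t)
    (h : Cparts s = Cparts t) : s = t := by
  have hcard : Multiset.card s = Multiset.card t := by
    have h1 := Csup hs hks
    have h2 := Csup ht hkt
    have h3 := Ccard4 hs hks
    have h4 := Ccard4 ht hkt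
    rw [h, h2] at h1
    omega
  have hfil : (s.map (fun x => x - 1)).filter (fun x => 0 < x)
      = (t.map (fun x => x - 1)).filter (fun x => 0 < x) := by
    have hh : Cparts s = (if 0 < Multiset.card s - 4
          then ({Multiset.card s - 4} : Multiset ℕ) else 0)
        + (s.map (fun x => x - 1)).filter (fun x => 0 < x) := by
      rw [Cparts, Multiset.filter_cons]
    have hh2 : Cparts t = (if 0 < Multiset.card t - 4
          then ({Multiset.card t - 4} : Multiset ℕ) else 0)
        + (t.map (fun x => x - 1)).filter (fun x => 0 < x) := by
      rw [Cparts, Multiset.filter_cons]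
    rw [hh, hh2, hcard] at h
    exact add_left_cancel h
  have hfil2 : s.filter (fun x => 1 < x) = t.filter (fun x => 1 < x) := by
    have := congrArg (Multiset.map (fun x => x + 1)) hfil
    rwa [shift_filter, shift_filter] at this
  have e1 := replicate_split hs
  have e2 := replicate_split ht
  rw [e1, e2, hfil2, hcard]


end PfAux

open PfAux in
/-- The main injection: partitions of `n-1` into (nonnegative-rank partitions of `n`)
plus (partitions of `n-1` of rank at most `-3`). -/
noncomputable def Fmap (n : ℕ) (hn : 0 < n) (μ : (n - 1).Partition) :
    {ν : n.Partition // 0 ≤ rank ν} ⊕ {μ' : (n - 1).Partition // rank μ' ≤ -3} :=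
  if h3 : rank μ ≤ -3 then Sum.inr ⟨μ, h3⟩
  else if h2 : rank μ = -2 then
    Sum.inl ⟨⟨Bparts μ.parts,
      fun {i} hi => Bpos (fun x hx => μ.parts_pos hx)
        (by have := h2; simp only [rank] at this; omega) i hi,
      by
        have hk : Multiset.card μ.parts = μ.parts.sup + 2 := by
          have := h2; simp only [rank] at this; omega
        rw [Bsum (fun x hx => μ.parts_pos hx) hk, μ.parts_sum]
        omega⟩,
      by
        have hk : Multiset.card μ.parts = μ.parts.sup + 2 := by
          have := h2; simp only [rank] at this; omega
        exact Brank (fun x hx => μ.parts_pos hx) hk⟩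
  else
    Sum.inl ⟨⟨Aparts μ.parts,
      fun {i} hi => Apos (fun x hx => μ.parts_pos hx) i hi,
      by rw [Asum (fun x hx => μ.parts_pos hx), μ.parts_sum]; omega⟩,
      by
        have hr : (-1 : ℤ) ≤ (μ.parts.sup : ℤ) - Multiset.card μ.parts := by
          have := h3; have := h2; simp only [rank] at *; omega
        exact Arank (fun x hx => μ.parts_pos hx) hr⟩

open PfAux in
lemma Fmap_inj (n : ℕ) (hn : 0 < n) : Function.Injective (Fmap n hn) := by
  intro μ₁ μ₂ h
  have hp1 : ∀ x ∈ μ₁.parts, 0 < x := fun x hx => μ₁.parts_pos hx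
  have hp2 : ∀ x ∈ μ₂.parts, 0 < x := fun x hx => μ₂.parts_pos hx
  unfold Fmap at h
  by_cases c13 : rank μ₁ ≤ -3 <;> by_cases c23 : rank μ₂ ≤ -3
  · rw [dif_pos c13, dif_pos c23] at h
    simpa using h
  · rw [dif_pos c13, dif_neg c23] at h
    by_cases c22 : rank μ₂ = -2 <;> simp [c22] at h
  · rw [dif_neg c13, dif_pos c23] at h
    by_cases c12 : rank μ₁ = -2 <;> simp [c12] at h
  · rw [dif_neg c13, dif_neg c23] at h
    have hk : ∀ (μ : (n-1).Partition), rank μ = -2 →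
        Multiset.card μ.parts = μ.parts.sup + 2 := by
      intro μ hμ; simp only [rank] at hμ; omega
    by_cases c12 : rank μ₁ = -2 <;> by_cases c22 : rank μ₂ = -2
    · rw [dif_pos c12, dif_pos c22] at h
      simp only [Sum.inl.injEq, Subtype.mk.injEq, Nat.Partition.mk.injEq] at h
      exact Nat.Partition.ext (B_inj hp1 (hk μ₁ c12) hp2 (hk μ₂ c22) (congrArg (fun x => x.1.parts) h))
    · rw [dif_pos c12, dif_neg c22] at h
      simp only [Sum.inl.injEq, Subtype.mk.injEq, Nat.Partition.mk.injEq] at h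
      exact absurd h.symm fun hh => AB_disjoint hp2 hp1 (hk μ₁ c12) (congrArg (fun x => x.1.parts) hh)
    · rw [dif_neg c12, dif_pos c22] at h
      simp only [Sum.inl.injEq, Subtype.mk.injEq, Nat.Partition.mk.injEq] at h
      exact absurd h fun hh => AB_disjoint hp1 hp2 (hk μ₂ c22) (congrArg (fun x => x.1.parts) hh)
    · rw [dif_neg c12, dif_neg c22] at h
      simp only [Sum.inl.injEq, Subtype.mk.injEq, Nat.Partition.mk.injEq] at h
      exact Nat.Partition.ext (A_inj hp1 hp2 (congrArg (fun x => x.1.parts) h))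

lemma key_count (n : ℕ) (hn : 0 < n) :
    p (n - 1) ≤ Nrank n + Nat.card {μ : (n - 1).Partition // rank μ ≤ -3} := by
  have h := Nat.card_le_card_of_injective (Fmap n hn) (Fmap_inj n hn)
  rw [Nat.card_sum] at h
  exact h

open PfAux in
lemma tail_bound (n : ℕ) :
    Nat.card {μ : (n - 1).Partition // rank μ ≤ -3} ≤ pz ((n : ℤ) - 5) := by
  rcases isEmpty_or_nonempty {μ : (n - 1).Partition // rank μ ≤ -3} with he | hne
  · rw [Nat.card_of_isEmpty]
    exact Nat.zero_le _
  · obtain ⟨⟨μ₀, hμ₀⟩⟩ := hne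
    have hp0 : ∀ x ∈ μ₀.parts, 0 < x := fun x hx => μ₀.parts_pos hx
    have hk0 : μ₀.parts.sup + 3 ≤ Multiset.card μ₀.parts := by
      simp only [rank] at hμ₀; omega
    have hn5 : 5 ≤ n := by
      have h1 := Ccard4 hp0 hk0
      have h2 := card_le_sum hp0
      rw [μ₀.parts_sum] at h2
      omega
    have hpz : pz ((n : ℤ) - 5) = p (n - 5) := by
      rw [pz, if_pos (by omega : (0 : ℤ) ≤ (n : ℤ) - 5)]
      congr 1
      omega
    rw [hpz]
    have hG : ∃ G : {μ : (n - 1).Partition // rank μ ≤ -3} → (n - 5).Partition,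
        Function.Injective G := by
      refine ⟨fun ⟨μ, hμ⟩ => ⟨Cparts μ.parts,
        fun {i} hi => Cpos i hi, ?_⟩, ?_⟩
      · have hp : ∀ x ∈ μ.parts, 0 < x := fun x hx => μ.parts_pos hx
        have hk : μ.parts.sup + 3 ≤ Multiset.card μ.parts := by
          simp only [rank] at hμ; omega
        have := Csum' hp hk
        rw [μ.parts_sum] at this
        omega
      · rintro ⟨μ, hμ⟩ ⟨μ', hμ'⟩ hGG
        simp only [Nat.Partition.mk.injEq] at hGG
        have hk : μ.parts.sup + 3 ≤ Multiset.card μ.parts := by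
          simp only [rank] at hμ; omega
        have hk' : μ'.parts.sup + 3 ≤ Multiset.card μ'.parts := by
          simp only [rank] at hμ'; omega
        exact Subtype.ext (Nat.Partition.ext
          (C_inj (fun x hx => μ.parts_pos hx) hk (fun x hx => μ'.parts_pos hx) hk' hGG))
    obtain ⟨G, hG⟩ := hG
    exact Nat.card_le_card_of_injective G hG

theorem stmt1 (n : ℕ) (hn : 0 < n) :
    (pz ((n : ℤ) - 1) : ℤ) - (pz ((n : ℤ) - 5) : ℤ) ≤ (Nrank n : ℤ) := by
  have h1 := key_count n hn
  have h2 := tail_bound n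
  have hpz1 : pz ((n : ℤ) - 1) = p (n - 1) := by
    rw [pz, if_pos (by omega : (0 : ℤ) ≤ (n : ℤ) - 1)]
    congr 1
    omega
  rw [hpz1]
  have : p (n - 1) ≤ Nrank n + pz ((n : ℤ) - 5) := le_trans h1 (by omega)
  push_cast
  omega
end

section
/- For every positive integer n and every integer k ≥ 1, we have (-1)^{k-1} ( Σ_{j=0}^{k-1} (-1)^j p(n - j(3j+5)/2 - 1) - N(n) ) ≥ 0, where N(n) is the number of partitions of n with non-negative rank; moreover the inequality is strict when n ≥ k(3k+5)/2 + 1. -/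
open PowerSeries Finset

section DysonSection
open Multiset

lemma msup_mem {s : Multiset ℕ} (h : s ≠ 0) : s.sup ∈ s := by
  induction s using Multiset.induction with
  | empty => simp at h
  | cons a t ih =>
    rw [Multiset.sup_cons]
    rcases eq_or_ne t 0 with rfl | ht
    · simp
    · rcases le_total a t.sup with hle | hle
      · rw [sup_eq_right.2 hle]; exact Multiset.mem_cons_of_mem (ih ht)
      · rw [sup_eq_left.2 hle]; exact Multiset.mem_cons_self a t

lemma mcard_le_sum {s : Multiset ℕ} (h : ∀ x ∈ s, 1 ≤ x) : Multiset.card s ≤ s.sum := by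
  induction s using Multiset.induction with
  | empty => simp
  | cons a t ih =>
    simp only [Multiset.card_cons, Multiset.sum_cons]
    have := h a (Multiset.mem_cons_self a t)
    have := ih (fun x hx => h x (Multiset.mem_cons_of_mem hx))
    omega

lemma msum_map_pred {s : Multiset ℕ} (h : ∀ x ∈ s, 1 ≤ x) :
    (s.map (· - 1)).sum = s.sum - Multiset.card s := by
  induction s using Multiset.induction with
  | empty => simp
  | cons a t ih =>
    simp only [Multiset.map_cons, Multiset.sum_cons, Multiset.card_cons]
    rw [ih (fun x hx => h x (Multiset.mem_cons_of_mem hx))]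
    have := h a (Multiset.mem_cons_self a t)
    have := mcard_le_sum (fun x hx => h x (Multiset.mem_cons_of_mem hx))
    omega

lemma msum_map_succ (s : Multiset ℕ) :
    (s.map (· + 1)).sum = s.sum + Multiset.card s := by
  induction s using Multiset.induction with
  | empty => simp
  | cons a t ih => simp only [Multiset.map_cons, Multiset.sum_cons, Multiset.card_cons]; omega

namespace Dyson

/-- forward parts -/
def fwdParts (r : ℕ) (s : Multiset ℕ) : Multiset ℕ :=
  (s.erase s.sup).map (· + 1) +
    Multiset.replicate (s.sup - r - 1 - Multiset.card (s.erase s.sup)) 1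

/-- backward parts -/
def bwdParts (r : ℕ) (t : Multiset ℕ) : Multiset ℕ :=
  (Multiset.card t + r + 1) ::ₘ (t.filter (fun x => x ≠ 1)).map (· - 1)

section fwd
variable {r m : ℕ} {s : Multiset ℕ} (hpos : ∀ x ∈ s, 0 < x) (hsum : s.sum = m)
  (hm : r + 1 ≤ m) (hrank : (r : ℤ) ≤ (s.sup : ℤ) - (Multiset.card s : ℤ))

include hpos hsum hm hrank

lemma s_ne_zero : s ≠ 0 := by
  rintro rfl; simp at hsum; omega

lemma sup_mem_s : s.sup ∈ s := msup_mem (s_ne_zero hpos hsum hm hrank)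

-- basic numeric facts
lemma basic_facts :
    s.sup + (s.erase s.sup).sum = m ∧
    Multiset.card (s.erase s.sup) + 1 = Multiset.card s ∧
    r + Multiset.card s ≤ s.sup := by
  have ha := sup_mem_s hpos hsum hm hrank
  have h1 : s.sup ::ₘ s.erase s.sup = s := Multiset.cons_erase ha
  constructor
  · have := congrArg Multiset.sum h1
    rw [Multiset.sum_cons] at this
    omega
  constructor
  · have := congrArg Multiset.card h1
    rw [Multiset.card_cons] at this
    omega
  · have hc1 : 1 ≤ Multiset.card s := by
      have := congrArg Multiset.card h1
      rw [Multiset.card_cons] at this; omega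
    omega

lemma fwd_pos : ∀ x ∈ fwdParts r s, 0 < x := by
  intro x hx
  rcases Multiset.mem_add.1 hx with h | h
  · rcases Multiset.mem_map.1 h with ⟨y, _, rfl⟩; omega
  · rw [Multiset.eq_of_mem_replicate h]; norm_num

lemma fwd_card : Multiset.card (fwdParts r s) = s.sup - r - 1 := by
  obtain ⟨h1, h2, h3⟩ := basic_facts hpos hsum hm hrank
  simp only [fwdParts, Multiset.card_add, Multiset.card_map, Multiset.card_replicate]
  omega

lemma fwd_sum : (fwdParts r s).sum = m - r - 1 := by
  obtain ⟨h1, h2, h3⟩ := basic_facts hpos hsum hm hrank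
  simp only [fwdParts, Multiset.sum_add, msum_map_succ, Multiset.sum_replicate, smul_eq_mul,
    mul_one]
  omega

lemma fwd_sup_le : (fwdParts r s).sup ≤ s.sup + 1 := by
  apply Multiset.sup_le.2
  intro b hb
  rcases Multiset.mem_add.1 hb with h | h
  · rcases Multiset.mem_map.1 h with ⟨y, hy, rfl⟩
    have : y ≤ s.sup := Multiset.le_sup (Multiset.mem_of_mem_erase hy)
    omega
  · rw [Multiset.eq_of_mem_replicate h]; omega

lemma fwd_rank : ((fwdParts r s).sup : ℤ) - (Multiset.card (fwdParts r s) : ℤ) ≤ (r : ℤ) + 2 := by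
  obtain ⟨h1, h2, h3⟩ := basic_facts hpos hsum hm hrank
  have hc := fwd_card hpos hsum hm hrank
  have hs := fwd_sup_le hpos hsum hm hrank
  rw [hc]
  have : r + 1 ≤ s.sup := by omega
  push_cast [Nat.cast_sub, this]
  omega

lemma bwd_fwd : bwdParts r (fwdParts r s) = fwdParts r s → True := fun _ => trivial

lemma left_inv_parts : bwdParts r (fwdParts r s) = s := by
  obtain ⟨h1, h2, h3⟩ := basic_facts hpos hsum hm hrank
  have ha := sup_mem_s hpos hsum hm hrank
  have hc := fwd_card hpos hsum hm hrank
  rw [bwdParts, hc]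
  have hhead : s.sup - r - 1 + r + 1 = s.sup := by omega
  rw [hhead]
  have hfilter : (fwdParts r s).filter (fun x => x ≠ 1) = (s.erase s.sup).map (· + 1) := by
    rw [fwdParts, Multiset.filter_add]
    have e1 : ((s.erase s.sup).map (· + 1)).filter (fun x => x ≠ 1) =
        (s.erase s.sup).map (· + 1) := by
      apply Multiset.filter_eq_self.2
      intro x hx
      rcases Multiset.mem_map.1 hx with ⟨y, hy, rfl⟩
      have : 0 < y := hpos y (Multiset.mem_of_mem_erase hy)
      omega
    have e2 : (Multiset.replicate (s.sup - r - 1 - Multiset.card (s.erase s.sup)) 1).filter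
        (fun x => x ≠ 1) = 0 := by
      rw [Multiset.filter_eq_nil]
      intro x hx
      rw [Multiset.eq_of_mem_replicate hx]
      simp
    rw [e1, e2, add_zero]
  rw [hfilter, Multiset.map_map]
  have : ((s.erase s.sup).map ((· - 1) ∘ (· + 1))) = s.erase s.sup := by
    rw [show ((· - 1) ∘ (· + 1) : ℕ → ℕ) = id from funext fun x => by simp, Multiset.map_id]
  rw [this, Multiset.cons_erase ha]

end fwd

section bwd
variable {r m : ℕ} {t : Multiset ℕ} (hpos : ∀ x ∈ t, 0 < x) (hsum : t.sum = m - r - 1)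
  (hm : r + 1 ≤ m) (hrank : (t.sup : ℤ) - (Multiset.card t : ℤ) ≤ (r : ℤ) + 2)

include hpos hsum hm hrank

lemma bwd_pos : ∀ x ∈ bwdParts r t, 0 < x := by
  intro x hx
  rcases Multiset.mem_cons.1 hx with rfl | h
  · omega
  · rcases Multiset.mem_map.1 h with ⟨y, hy, rfl⟩
    have h2 := (Multiset.mem_filter.1 hy).2
    have h1 := hpos y (Multiset.mem_filter.1 hy).1
    simp only [ne_eq] at h2
    omega

lemma bwd_sum : (bwdParts r t).sum = m := by
  rw [bwdParts, Multiset.sum_cons]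
  have hff : ∀ x ∈ t.filter (fun x => x ≠ 1), 1 ≤ x := by
    intro x hx; exact hpos x (Multiset.mem_filter.1 hx).1
  rw [msum_map_pred hff]
  have hsplit : t.filter (fun x => x ≠ 1) + t.filter (fun x => ¬ x ≠ 1) = t :=
    Multiset.filter_add_not _ t
  have hones : t.filter (fun x => ¬ x ≠ 1) = Multiset.replicate
      (Multiset.card (t.filter (fun x => ¬ x ≠ 1))) 1 := by
    apply Multiset.eq_replicate_card.2
    intro b hb
    have := (Multiset.mem_filter.1 hb).2
    simpa using this
  have hsum2 := congrArg Multiset.sum hsplit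
  have hcard2 := congrArg Multiset.card hsplit
  rw [Multiset.sum_add] at hsum2
  rw [Multiset.card_add] at hcard2
  have hsum3 : (t.filter (fun x => ¬ x ≠ 1)).sum =
      Multiset.card (t.filter (fun x => ¬ x ≠ 1)) := by
    conv_lhs => rw [hones]
    simp
  have hcf : Multiset.card (t.filter (fun x => x ≠ 1)) ≤ (t.filter (fun x => x ≠ 1)).sum :=
    mcard_le_sum hff
  omega

lemma bwd_sup : (bwdParts r t).sup = Multiset.card t + r + 1 := by
  rw [bwdParts, Multiset.sup_cons]
  apply sup_eq_left.2
  apply Multiset.sup_le.2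
  intro b hb
  rcases Multiset.mem_map.1 hb with ⟨y, hy, rfl⟩
  have hyt : y ∈ t := (Multiset.mem_filter.1 hy).1
  have : y ≤ t.sup := Multiset.le_sup hyt
  have : (t.sup : ℤ) ≤ (Multiset.card t : ℤ) + r + 2 := by omega
  omega

lemma bwd_rank : (r : ℤ) ≤ ((bwdParts r t).sup : ℤ) - (Multiset.card (bwdParts r t) : ℤ) := by
  rw [bwd_sup hpos hsum hm hrank, bwdParts, Multiset.card_cons, Multiset.card_map]
  have : Multiset.card (t.filter (fun x => x ≠ 1)) ≤ Multiset.card t :=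
    Multiset.card_le_card (Multiset.filter_le _ t)
  push_cast
  omega

lemma right_inv_parts : fwdParts r (bwdParts r t) = t := by
  have hsup := bwd_sup hpos hsum hm hrank
  rw [fwdParts, hsup, bwdParts, Multiset.erase_cons_head, Multiset.map_map, Multiset.card_map]
  have e1 : (t.filter (fun x => x ≠ 1)).map ((· + 1) ∘ (· - 1)) = t.filter (fun x => x ≠ 1) := by
    have hcg : ∀ x ∈ t.filter (fun x => x ≠ 1), ((· + 1) ∘ (· - 1)) x = id x := by
      intro x hx
      have h1 := hpos x (Multiset.mem_filter.1 hx).1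
      simp only [Function.comp_apply, id_eq]
      omega
    rw [Multiset.map_congr rfl hcg, Multiset.map_id]
  rw [e1]
  have hsplit : t.filter (fun x => x ≠ 1) + t.filter (fun x => ¬ x ≠ 1) = t :=
    Multiset.filter_add_not _ t
  have hcard2 := congrArg Multiset.card hsplit
  rw [Multiset.card_add] at hcard2
  have hones : t.filter (fun x => ¬ x ≠ 1) = Multiset.replicate
      (Multiset.card (t.filter (fun x => ¬ x ≠ 1))) 1 := by
    apply Multiset.eq_replicate_card.2
    intro b hb
    have := (Multiset.mem_filter.1 hb).2
    simpa using this
  have hcount : Multiset.card t + r + 1 - r - 1 - Multiset.card (t.filter (fun x => x ≠ 1)) =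
      Multiset.card (t.filter (fun x => ¬ x ≠ 1)) := by omega
  rw [hcount, ← hones, hsplit]

end bwd

lemma dyson_card (r m : ℕ) (hm : r + 1 ≤ m) :
    Nat.card {P : m.Partition // (r : ℤ) ≤ rank P}
      = Nat.card {Q : (m - r - 1).Partition // rank Q ≤ (r : ℤ) + 2} := by
  apply Nat.card_congr
  refine
    { toFun := fun x => ⟨⟨fwdParts r x.1.parts,
        fun {i} hi => fwd_pos (fun y hy => x.1.parts_pos hy) x.1.parts_sum hm x.2 i hi,
        fwd_sum (fun y hy => x.1.parts_pos hy) x.1.parts_sum hm x.2⟩,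
        fwd_rank (fun y hy => x.1.parts_pos hy) x.1.parts_sum hm x.2⟩,
      invFun := fun y => ⟨⟨bwdParts r y.1.parts,
        fun {i} hi => bwd_pos (fun z hz => y.1.parts_pos hz) y.1.parts_sum hm y.2 i hi,
        bwd_sum (fun z hz => y.1.parts_pos hz) y.1.parts_sum hm y.2⟩,
        bwd_rank (fun z hz => y.1.parts_pos hz) y.1.parts_sum hm y.2⟩,
      left_inv := ?_, right_inv := ?_ }
  · rintro ⟨P, hP⟩
    apply Subtype.ext
    apply Nat.Partition.ext
    exact left_inv_parts (fun y hy => P.parts_pos hy) P.parts_sum hm hP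
  · rintro ⟨Q, hQ⟩
    apply Subtype.ext
    apply Nat.Partition.ext
    exact right_inv_parts (fun y hy => Q.parts_pos hy) Q.parts_sum hm hQ

end Dyson
end DysonSection

noncomputable def A (r m : ℕ) : ℕ := Nat.card {P : m.Partition // (r : ℤ) ≤ rank P}


lemma card_split (m' : ℕ) (s : ℤ) :
    Nat.card {Q : m'.Partition // rank Q ≤ s} + Nat.card {Q : m'.Partition // s < rank Q}
      = p m' := by
  classical
  rw [p, Nat.card_eq_fintype_card, Nat.card_eq_fintype_card, Nat.card_eq_fintype_card,
    Fintype.card_subtype, Fintype.card_subtype]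
  have he : (Finset.filter (fun x : m'.Partition => s < rank x) Finset.univ)
      = Finset.filter (fun x => ¬ rank x ≤ s) Finset.univ := by
    apply Finset.filter_congr
    intro Q _
    simp [not_le]
  rw [he, Finset.card_filter_add_card_filter_not, Finset.card_univ]

lemma sup_le_of_partition {m : ℕ} (P : m.Partition) : P.parts.sup ≤ m := by
  apply Multiset.sup_le.2
  intro b hb
  calc b ≤ P.parts.sum := Multiset.le_sum_of_mem hb
  _ = m := P.parts_sum

lemma A_eq_zero {r m : ℕ} (h : m ≤ r) (h1 : 1 ≤ r) : A r m = 0 := by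
  rw [A, Nat.card_eq_zero]
  left
  rw [isEmpty_subtype]
  intro P
  have hsup := sup_le_of_partition P
  have hcard : Multiset.card P.parts = 0 → m = 0 := by
    intro hc
    rw [Multiset.card_eq_zero] at hc
    have := P.parts_sum
    rw [hc] at this
    simpa using this.symm
  rw [rank]
  rcases Nat.eq_zero_or_pos (Multiset.card P.parts) with hc | hc
  · have := hcard hc
    omega
  · omega

lemma dyson_nat (r m : ℕ) (hm : r + 1 ≤ m) :
    A r m + A (r + 3) (m - r - 1) = p (m - r - 1) := by
  rw [A, A, Dyson.dyson_card r m hm]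
  have hiff : ∀ Q : (m - r - 1).Partition, (((r + 3 : ℕ) : ℤ) ≤ rank Q) ↔ ((r : ℤ) + 2 < rank Q) := by
    intro Q
    push_cast
    omega
  simp only [hiff]
  exact card_split (m - r - 1) ((r : ℤ) + 2)

noncomputable def Az (r : ℕ) (m : ℤ) : ℕ := if 0 < m then A r m.toNat else 0

lemma dysonZ (r : ℕ) (m : ℤ) : Az r m + Az (r + 3) (m - r - 1) = pz (m - r - 1) := by
  by_cases h1 : 0 < m
  · by_cases h2 : (r : ℤ) + 1 ≤ m
    · have hm : r + 1 ≤ m.toNat := by omega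
      have hd := dyson_nat r m.toNat hm
      rw [Az, if_pos h1, pz, if_pos (by omega : (0:ℤ) ≤ m - r - 1)]
      have htn : (m - r - 1).toNat = m.toNat - r - 1 := by omega
      rw [Az, htn]
      by_cases h3 : (0:ℤ) < m - r - 1
      · rw [if_pos h3, hd]
      · rw [if_neg h3]
        have h0 : m.toNat - r - 1 = 0 := by omega
        rw [h0] at hd ⊢
        rw [A_eq_zero (Nat.zero_le _) (by omega)] at hd
        omega
    · rw [Az, if_pos h1, A_eq_zero (by omega : m.toNat ≤ r) (by omega)]
      rw [Az, if_neg (by omega), pz, if_neg (by omega)]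
  · rw [Az, if_neg h1, Az, if_neg (by omega), pz, if_neg (by omega)]

def g : ℕ → ℕ
  | 0 => 0
  | j + 1 => g j + 3 * j + 1

lemma two_g : ∀ j : ℕ, 2 * g (j + 1) = j * (3 * j + 5) + 2 := by
  intro j
  induction j with
  | zero => rfl
  | succ i ih =>
    rw [show g (i + 1 + 1) = g (i + 1) + 3 * (i + 1) + 1 from rfl, Nat.mul_add, Nat.mul_add, ih]
    ring

lemma main_id (n : ℕ) (hn : 1 ≤ n) (k : ℕ) :
    (Nrank n : ℤ) = (∑ j ∈ Finset.range k, (-1 : ℤ) ^ j * (pz ((n : ℤ) - g (j + 1)) : ℤ))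
      + (-1 : ℤ) ^ k * (Az (3 * k) ((n : ℤ) - g k) : ℤ) := by
  induction k with
  | zero =>
    simp only [Finset.range_zero, Finset.sum_empty, pow_zero, one_mul, zero_add,
      Nat.mul_zero, show g 0 = 0 from rfl, Nat.cast_zero, sub_zero]
    rw [Az, if_pos (by exact_mod_cast hn : (0:ℤ) < (n:ℤ))]
    rw [Int.toNat_natCast]
    rw [Nrank, A]
    norm_num
  | succ k ih =>
    rw [Finset.sum_range_succ, ih]
    have hd := dysonZ (3 * k) ((n : ℤ) - g k)
    have harg : (n : ℤ) - g k - (3 * k : ℕ) - 1 = (n : ℤ) - g (k + 1) := by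
      have : (g (k + 1) : ℤ) = (g k : ℤ) + 3 * k + 1 := by
        rw [show g (k + 1) = g k + 3 * k + 1 from rfl]
        push_cast
        ring
      push_cast
      omega
    rw [harg] at hd
    have hAz : (Az (3 * k) ((n : ℤ) - g k) : ℤ)
        = (pz ((n : ℤ) - g (k + 1)) : ℤ) - (Az (3 * k + 3) ((n : ℤ) - g (k + 1)) : ℤ) := by
      have := congrArg (Nat.cast : ℕ → ℤ) hd
      push_cast at this
      linarith
    rw [hAz, show 3 * (k + 1) = 3 * k + 3 from by ring]
    ring

lemma hg_int (j : ℕ) : ((j : ℤ) * (3 * j + 5)) / 2 + 1 = (g (j + 1) : ℤ) := by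
  have h := two_g j
  have h' : (j : ℤ) * (3 * j + 5) = 2 * ((g (j + 1) : ℤ) - 1) := by
    have := congrArg (Nat.cast : ℕ → ℤ) h
    push_cast at this
    linarith
  rw [h', Int.mul_ediv_cancel_left _ two_ne_zero]
  ring

theorem stmt2 (n k : ℕ) (hn : 0 < n) (hk : 1 ≤ k) :
    0 ≤ (-1 : ℤ) ^ (k - 1) *
      ((∑ j ∈ range k, (-1 : ℤ) ^ j * (pz ((n : ℤ) - (j * (3 * j + 5)) / 2 - 1) : ℤ)) -
        (Nrank n : ℤ)) ∧
    (n ≥ k * (3 * k + 5) / 2 + 1 →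
      0 < (-1 : ℤ) ^ (k - 1) *
        ((∑ j ∈ range k, (-1 : ℤ) ^ j * (pz ((n : ℤ) - (j * (3 * j + 5)) / 2 - 1) : ℤ)) -
          (Nrank n : ℤ))) := by
  obtain ⟨k', rfl⟩ : ∃ k', k = k' + 1 := ⟨k - 1, by omega⟩
  have hsum : (∑ j ∈ Finset.range (k' + 1),
        (-1 : ℤ) ^ j * (pz ((n : ℤ) - (j * (3 * j + 5)) / 2 - 1) : ℤ))
      = ∑ j ∈ Finset.range (k' + 1), (-1 : ℤ) ^ j * (pz ((n : ℤ) - g (j + 1)) : ℤ) := by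
    apply Finset.sum_congr rfl
    intro j _
    have harg : (n : ℤ) - (j * (3 * j + 5)) / 2 - 1 = (n : ℤ) - g (j + 1) := by
      have := hg_int j
      linarith
    rw [harg]
  have hm := main_id n hn (k' + 1)
  have hpow : (-1 : ℤ) ^ k' * (-1 : ℤ) ^ k' = 1 := by
    rw [← pow_add]
    exact Even.neg_one_pow ⟨k', rfl⟩
  have key : (-1 : ℤ) ^ (k' + 1 - 1) *
      ((∑ j ∈ Finset.range (k' + 1),
          (-1 : ℤ) ^ j * (pz ((n : ℤ) - (j * (3 * j + 5)) / 2 - 1) : ℤ)) - (Nrank n : ℤ))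
      = (Az (3 * (k' + 1)) ((n : ℤ) - g (k' + 1)) : ℤ) := by
    rw [show k' + 1 - 1 = k' from rfl, hsum]
    have h2 : (∑ j ∈ Finset.range (k' + 1), (-1 : ℤ) ^ j * (pz ((n : ℤ) - g (j + 1)) : ℤ))
          - (Nrank n : ℤ)
        = (-1 : ℤ) ^ k' * (Az (3 * (k' + 1)) ((n : ℤ) - g (k' + 1)) : ℤ) := by
      rw [hm]
      ring
    rw [h2, ← mul_assoc, hpow, one_mul]
  constructor
  · rw [key]
    positivity
  · intro hge
    rw [key]
    have hstep : g (k' + 2) = g (k' + 1) + 3 * (k' + 1) + 1 := rfl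
    have hgk : g (k' + 1) + 3 * (k' + 1) + 1 ≤ n := by
      have h := two_g (k' + 1)
      rw [show g (k' + 1 + 1) = g (k' + 1) + 3 * (k' + 1) + 1 from rfl] at h
      generalize hX : (k' + 1) * (3 * (k' + 1) + 5) = X at h hge
      omega
    rw [Az, if_pos (by exact_mod_cast (by omega : (0:ℤ) < (n : ℤ) - (g (k' + 1) : ℤ)))]
    have hM : ((n : ℤ) - (g (k' + 1) : ℤ)).toNat = n - g (k' + 1) := by omega
    rw [hM, A]
    have hwit : ((3 * (k' + 1) : ℕ) : ℤ) ≤ rank (Nat.Partition.indiscrete (n - g (k' + 1))) := by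
      rw [rank, Nat.Partition.indiscrete_parts (by omega)]
      simp only [Multiset.sup_singleton, Multiset.card_singleton]
      push_cast
      omega
    have : Nonempty {P : (n - g (k' + 1)).Partition //
        ((3 * (k' + 1) : ℕ) : ℤ) ≤ rank P} := ⟨⟨Nat.Partition.indiscrete _, hwit⟩⟩
    exact_mod_cast Nat.card_pos
end

section
/- For every integer n ≥ 0, p(n) ≥ C(n) and p(n) - p(n-1) ≤ C(n), where C(n) is the number of partitions of n with non-negative crank. -/
open PowerSeries Finset

lemma count_one_eq_zero_crank {n : ℕ} (P : n.Partition) (h : P.parts.count 1 = 0) :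
    0 ≤ crank P := by
  unfold crank
  rw [if_pos h]
  exact Int.ofNat_nonneg _

theorem stmt10 (n : ℕ) :
    Ccrank n ≤ p n ∧ (p n : ℤ) - (pz ((n : ℤ) - 1) : ℤ) ≤ (Ccrank n : ℤ) := by
  have h1 : Ccrank n ≤ p n := by
    unfold Ccrank p
    exact Nat.card_le_card_of_injective (fun P => P.1) Subtype.val_injective
  refine ⟨h1, ?_⟩
  have hsplit : p n = Nat.card {P : n.Partition // P.parts.count 1 = 0}
      + Nat.card {P : n.Partition // ¬ (P.parts.count 1 = 0)} := by
    rw [p, ← Nat.card_congr (Equiv.sumCompl (fun P : n.Partition => P.parts.count 1 = 0)),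
      Nat.card_sum]
  have hA : Nat.card {P : n.Partition // P.parts.count 1 = 0} ≤ Ccrank n := by
    unfold Ccrank
    exact Nat.card_le_card_of_injective
      (fun P => ⟨P.1, count_one_eq_zero_crank P.1 P.2⟩)
      (fun P Q h => Subtype.ext (Subtype.mk_eq_mk.mp h))
  have hB : Nat.card {P : n.Partition // ¬ (P.parts.count 1 = 0)} ≤ pz ((n : ℤ) - 1) := by
    cases n with
    | zero =>
      have : IsEmpty {P : (0:ℕ).Partition // ¬ (P.parts.count 1 = 0)} := by
        constructor
        rintro ⟨P, hP⟩
        apply hP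
        have : P.parts = 0 := by
          by_contra hne
          obtain ⟨a, ha⟩ := Multiset.exists_mem_of_ne_zero hne
          have hle : a ≤ P.parts.sum := Multiset.single_le_sum (fun x _ => Nat.zero_le x) a ha
          have := P.parts_pos ha
          have hs : P.parts.sum = 0 := P.parts_sum
          omega
        simp [this]
      simp [Nat.card_of_isEmpty]
    | succ m =>
      have hz : ((m + 1 : ℕ) : ℤ) - 1 = (m : ℤ) := by push_cast; ring
      rw [hz]
      have : pz (m : ℤ) = p m := by simp [pz]
      rw [this, p]
      apply Nat.card_le_card_of_injective
        (fun P => (⟨P.1.parts.erase 1,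
          fun ha => P.1.parts_pos (Multiset.mem_of_mem_erase ha), by
            have h1 : (1:ℕ) ∈ P.1.parts := Multiset.count_pos.mp (Nat.pos_of_ne_zero P.2)
            have hc : (1 ::ₘ P.1.parts.erase 1).sum = m + 1 := by
              rw [Multiset.cons_erase h1]; exact P.1.parts_sum
            rw [Multiset.sum_cons] at hc
            omega⟩ : m.Partition))
      intro P Q h
      have h1P : (1:ℕ) ∈ P.1.parts := Multiset.count_pos.mp (Nat.pos_of_ne_zero P.2)
      have h1Q : (1:ℕ) ∈ Q.1.parts := Multiset.count_pos.mp (Nat.pos_of_ne_zero Q.2)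
      have he : P.1.parts.erase 1 = Q.1.parts.erase 1 := congrArg Nat.Partition.parts h
      have hpq : P.1.parts = Q.1.parts := by
        rw [← Multiset.cons_erase h1P, ← Multiset.cons_erase h1Q, he]
      exact Subtype.ext (Nat.Partition.ext hpq)
  have hpz : (0:ℕ) ≤ pz ((n : ℤ) - 1) := Nat.zero_le _
  omega
end

section
/- As formal power series, (1/(q;q)_∞) Σ_{n=0}^∞ (-1)^n q^{n(n+1)/2} = Σ_{n=0}^∞ q^{n(n+1)} / ((q;q)_n)^2, where (q;q)_n = Π_{i=1}^n (1-q^i). -/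
open PowerSeries Finset

namespace StmtAux
open Filter

instance : T2Space (PowerSeries ℚ) :=
  inferInstanceAs (T2Space ((Unit →₀ ℕ) → ℚ))

/-- triangular number -/
def T (n : ℕ) : ℕ := n * (n + 1) / 2

lemma two_T (n : ℕ) : 2 * T n = n * (n + 1) :=
  Nat.mul_div_cancel' ((Nat.even_mul_succ_self n).two_dvd)

lemma le_T (n : ℕ) : n ≤ T n := by
  have := two_T n; nlinarith [this]

lemma T_zero : T 0 = 0 := rfl

lemma T_succ (k : ℕ) : T (k + 1) = T k + (k + 1) := by
  have h1 := two_T k; have h2 := two_T (k+1)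
  apply Nat.eq_of_mul_eq_mul_left (show 0 < 2 by norm_num)
  nlinarith [h1, h2]

lemma exp_key {n m : ℕ} (h : n ≤ m) :
    n * (n + 1) + (T (m - n) + n * (m - n)) = T m + T n := by
  obtain ⟨a, rfl⟩ := Nat.exists_eq_add_of_le h
  have h1 := two_T a; have h2 := two_T (n + a); have h3 := two_T n
  have ha : n + a - n = a := by omega
  rw [ha]
  nlinarith [h1, h2, h3]

-- qPoch facts
lemma constantCoeff_qPoch (n : ℕ) : constantCoeff (R := ℚ) (qPoch n) = 1 := by
  rw [qPoch, map_prod]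
  apply Finset.prod_eq_one
  intro i _
  simp

lemma cc_qPoch_ne (n : ℕ) : constantCoeff (R := ℚ) (qPoch n) ≠ 0 := by
  rw [constantCoeff_qPoch]; exact one_ne_zero

lemma qPoch_ne_zero (n : ℕ) : qPoch n ≠ 0 := by
  intro h
  have := constantCoeff_qPoch n
  rw [h, map_zero] at this
  exact (one_ne_zero : (1:ℚ) ≠ 0) this.symm

lemma qPoch_mul_inv (n : ℕ) : qPoch n * (qPoch n)⁻¹ = 1 :=
  PowerSeries.mul_inv_cancel _ (cc_qPoch_ne _)

lemma qPoch_succ (n : ℕ) : qPoch (n + 1) = qPoch n * (1 - X ^ (n + 1)) :=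
  Finset.prod_range_succ _ n

lemma qPoch_zero : qPoch 0 = 1 := rfl

lemma inv_qPoch_zero : (qPoch 0)⁻¹ = 1 := by
  rw [PowerSeries.inv_eq_iff_mul_eq_one (cc_qPoch_ne _), qPoch_zero, one_mul]

lemma inv_succ (k : ℕ) : (qPoch (k + 1))⁻¹ * (1 - X ^ (k + 1)) = (qPoch k)⁻¹ := by
  apply mul_right_cancel₀ (qPoch_ne_zero k)
  calc (qPoch (k+1))⁻¹ * (1 - X ^ (k+1)) * qPoch k
      = (qPoch (k+1))⁻¹ * (qPoch k * (1 - X ^ (k+1))) := by ring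
    _ = (qPoch (k+1))⁻¹ * qPoch (k+1) := by rw [← qPoch_succ]
    _ = 1 := PowerSeries.inv_mul_cancel _ (cc_qPoch_ne _)
    _ = (qPoch k)⁻¹ * qPoch k := (PowerSeries.inv_mul_cancel _ (cc_qPoch_ne _)).symm

lemma inv_sq (n : ℕ) : ((qPoch n) ^ 2)⁻¹ = (qPoch n)⁻¹ * (qPoch n)⁻¹ := by
  rw [PowerSeries.inv_eq_iff_mul_eq_one]
  · calc (qPoch n)⁻¹ * (qPoch n)⁻¹ * qPoch n ^ 2
        = ((qPoch n)⁻¹ * qPoch n) * ((qPoch n)⁻¹ * qPoch n) := by ring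
      _ = 1 := by rw [PowerSeries.inv_mul_cancel _ (cc_qPoch_ne _)]; ring
  · rw [map_pow, constantCoeff_qPoch]; norm_num

-- coefficient tools
lemma coeff_mul_congr {B B' : PowerSeries ℚ} {N : ℕ}
    (h : ∀ k ≤ N, coeff (R := ℚ) k B = coeff (R := ℚ) k B') (A : PowerSeries ℚ) :
    coeff (R := ℚ) N (A * B) = coeff (R := ℚ) N (A * B') := by
  rw [coeff_mul, coeff_mul]
  apply Finset.sum_congr rfl
  intro p hp
  rw [h p.2 (by rw [Finset.HasAntidiagonal.mem_antidiagonal] at hp; omega)]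

lemma coeff_X_pow_mul_eq_zero {e N : ℕ} (h : N < e) (A : PowerSeries ℚ) :
    coeff (R := ℚ) N (X ^ e * A) = 0 := by
  rw [PowerSeries.coeff_X_pow_mul' A e N, if_neg (by omega)]

lemma pad {c : ℕ → PowerSeries ℚ} {e : ℕ → ℕ} (he : ∀ j, j ≤ e j) {N M : ℕ} (hM : N < M) :
    ∑ j ∈ range M, coeff (R := ℚ) N (X ^ (e j) * c j)
      = ∑ j ∈ range (N+1), coeff (R := ℚ) N (X ^ (e j) * c j) := by
  refine (Finset.sum_subset (Finset.range_subset_range.mpr hM) ?_).symm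
  intro j _ hj
  rw [Finset.mem_range, not_lt] at hj
  exact coeff_X_pow_mul_eq_zero (Nat.lt_of_lt_of_le (Nat.lt_of_succ_le hj) (he j)) _

lemma gaussB (m : ℕ) :
    ∑ n ∈ range (m + 1),
      (-1 : PowerSeries ℚ) ^ n * (X ^ (T n) *
        (qPoch m * ((qPoch n)⁻¹ * (qPoch (m - n))⁻¹))) = qPoch m := by
  induction m with
  | zero => simp [T_zero, inv_qPoch_zero, qPoch_zero]
  | succ m ih =>
    have hsplit : ∀ n ≤ m, qPoch (m+1) * ((qPoch n)⁻¹ * (qPoch (m+1-n))⁻¹)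
        = qPoch m * ((qPoch n)⁻¹ * (qPoch (m-n))⁻¹)
          + X ^ (m+1-n) * (qPoch m *
              ((if n = 0 then 0 else (qPoch (n-1))⁻¹) * (qPoch (m+1-n))⁻¹)) := by
      intro n hn
      match n, hn with
      | 0, _ =>
        rw [if_pos rfl]
        simp only [Nat.sub_zero, zero_mul, mul_zero, add_zero]
        calc qPoch (m+1) * ((qPoch 0)⁻¹ * (qPoch (m+1))⁻¹)
            = (qPoch (m+1) * (qPoch (m+1))⁻¹) * (qPoch 0)⁻¹ := by ring
          _ = (qPoch m * (qPoch m)⁻¹) * (qPoch 0)⁻¹ := by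
              rw [qPoch_mul_inv, qPoch_mul_inv]
          _ = qPoch m * ((qPoch 0)⁻¹ * (qPoch m)⁻¹) := by ring
      | (k+1), hn =>
        rw [if_neg (Nat.succ_ne_zero k), Nat.add_sub_cancel]
        -- let a := m - (k+1); m+1-(k+1) = a+1? no: m+1-(k+1) = m-k, m-(k+1) = m-k-1
        have h1 : m + 1 - (k+1) = (m - (k+1)) + 1 := by omega
        have h2 : (m - (k+1)) + 1 + (k + 1) = m + 1 := by omega
        set a := m - (k+1) with ha
        rw [h1, qPoch_succ m]
        have key : (1 : PowerSeries ℚ) - X ^ (m+1)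
            = (1 - X ^ (a+1)) + X ^ (a+1) * (1 - X ^ (k+1)) := by
          have : X ^ (a+1) * X ^ (k+1) = (X : PowerSeries ℚ) ^ (m+1) := by
            rw [← pow_add]; rw [h2]
          rw [mul_sub, mul_one, this]; ring
        rw [key]
        rw [mul_add, add_mul]  -- distribute
        congr 1
        · calc qPoch m * (1 - X ^ (a+1)) * ((qPoch (k+1))⁻¹ * (qPoch (a+1))⁻¹)
              = qPoch m * ((qPoch (k+1))⁻¹ * ((qPoch (a+1))⁻¹ * (1 - X ^ (a+1)))) := by ring
            _ = qPoch m * ((qPoch (k+1))⁻¹ * (qPoch a)⁻¹) := by rw [inv_succ a]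
        · calc qPoch m * (X ^ (a+1) * (1 - X ^ (k+1))) * ((qPoch (k+1))⁻¹ * (qPoch (a+1))⁻¹)
              = X ^ (a+1) * (qPoch m * (((qPoch (k+1))⁻¹ * (1 - X ^ (k+1))) * (qPoch (a+1))⁻¹)) := by
                ring
            _ = X ^ (a+1) * (qPoch m * ((qPoch k)⁻¹ * (qPoch (a+1))⁻¹)) := by rw [inv_succ k]
    rw [Finset.sum_range_succ]
    have hmain : ∑ n ∈ range (m+1),
        (-1:PowerSeries ℚ) ^ n * (X ^ (T n) * (qPoch (m+1) * ((qPoch n)⁻¹ * (qPoch (m+1-n))⁻¹)))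
      = (∑ n ∈ range (m+1),
          (-1:PowerSeries ℚ) ^ n * (X ^ (T n) * (qPoch m * ((qPoch n)⁻¹ * (qPoch (m-n))⁻¹))))
        + ∑ n ∈ range (m+1),
        (-1:PowerSeries ℚ) ^ n * (X ^ (T n) * (X ^ (m+1-n) * (qPoch m *
            ((if n = 0 then 0 else (qPoch (n-1))⁻¹) * (qPoch (m+1-n))⁻¹)))) := by
      rw [← Finset.sum_add_distrib]
      apply Finset.sum_congr rfl
      intro n hn
      rw [Finset.mem_range] at hn
      rw [hsplit n (by omega)]
      ring
    rw [hmain, ih]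
    have hlast : (-1:PowerSeries ℚ)^(m+1) * (X ^ (T (m+1)) *
          (qPoch (m+1) * ((qPoch (m+1))⁻¹ * (qPoch (m+1-(m+1)))⁻¹)))
        = -(X^(m+1) * ((-1:PowerSeries ℚ)^m * (X ^ (T m) * (qPoch m *
            ((qPoch m)⁻¹ * (qPoch (m-m))⁻¹))))) := by
      rw [Nat.sub_self, Nat.sub_self, T_succ]
      linear_combination ((-1:PowerSeries ℚ)^(m+1) * X^(T m + (m+1)) * (qPoch 0)⁻¹) *
          qPoch_mul_inv (m+1)
        + ((X:PowerSeries ℚ)^(m+1) * (-1:PowerSeries ℚ)^m * X^(T m) * (qPoch 0)⁻¹) *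
          qPoch_mul_inv m
    have hS2 : ∀ k < m + 1, (-1:PowerSeries ℚ)^(k+1) * (X ^ (T (k+1)) * (X ^ (m+1-(k+1)) * (qPoch m *
            ((if k+1 = 0 then 0 else (qPoch (k+1-1))⁻¹) * (qPoch (m+1-(k+1)))⁻¹))))
        = -(X^(m+1) * ((-1:PowerSeries ℚ)^k * (X ^ (T k) * (qPoch m *
            ((qPoch k)⁻¹ * (qPoch (m-k))⁻¹))))) := by
      intro k hk
      rw [if_neg (Nat.succ_ne_zero k), Nat.add_sub_cancel]
      have h3 : m + 1 - (k+1) = m - k := by omega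
      have h4 : T (k+1) + (m - k) = m + 1 + T k := by
        rw [T_succ]; omega
      rw [h3]
      have h5 : (X:PowerSeries ℚ) ^ (T (k+1)) * X ^ (m-k) = X ^ (m+1) * X ^ (T k) := by
        rw [← pow_add, h4, pow_add]
      calc (-1:PowerSeries ℚ)^(k+1) * (X ^ (T (k+1)) * (X ^ (m-k) * (qPoch m *
              ((qPoch k)⁻¹ * (qPoch (m-k))⁻¹))))
          = (-1:PowerSeries ℚ)^k * -1 * ((X ^ (T (k+1)) * X ^ (m-k)) * (qPoch m *
              ((qPoch k)⁻¹ * (qPoch (m-k))⁻¹))) := by ring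
        _ = (-1:PowerSeries ℚ)^k * -1 * ((X ^ (m+1) * X ^ (T k)) * (qPoch m *
              ((qPoch k)⁻¹ * (qPoch (m-k))⁻¹))) := by rw [h5]
        _ = _ := by ring
    rw [Finset.sum_range_succ']
    simp only [hlast]
    rw [Finset.sum_congr rfl (fun k hk => hS2 k (by have := Finset.mem_range.mp hk; omega))]
    simp only [if_true, mul_zero, zero_mul, add_zero]
    have hsum : (∑ k ∈ range m, -((X:PowerSeries ℚ)^(m+1) * ((-1:PowerSeries ℚ)^k *
            (X ^ (T k) * (qPoch m * ((qPoch k)⁻¹ * (qPoch (m-k))⁻¹))))))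
        + -((X:PowerSeries ℚ)^(m+1) * ((-1:PowerSeries ℚ)^m * (X ^ (T m) * (qPoch m *
            ((qPoch m)⁻¹ * (qPoch (m-m))⁻¹)))))
        = -(X^(m+1) * qPoch m) := by
      rw [Finset.sum_neg_distrib, ← Finset.mul_sum, ← neg_add, ← mul_add,
        ← Finset.sum_range_succ, ih]
    rw [qPoch_succ]
    linear_combination hsum


lemma gauss (m : ℕ) :
    ∑ n ∈ range (m + 1),
      (-1 : PowerSeries ℚ) ^ n * (X ^ (T n) * ((qPoch n)⁻¹ * (qPoch (m - n))⁻¹)) = 1 := by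
  have h2 : (∑ n ∈ range (m + 1),
      (-1 : PowerSeries ℚ) ^ n * (X ^ (T n) *
        (qPoch m * ((qPoch n)⁻¹ * (qPoch (m - n))⁻¹)))) * (qPoch m)⁻¹
      = qPoch m * (qPoch m)⁻¹ := by rw [gaussB m]
  rw [qPoch_mul_inv] at h2
  conv_rhs => rw [← h2]
  rw [Finset.sum_mul]
  apply Finset.sum_congr rfl
  intro n _
  linear_combination (-((-1 : PowerSeries ℚ) ^ n * X ^ (T n) *
    ((qPoch n)⁻¹ * (qPoch (m - n))⁻¹))) * qPoch_mul_inv m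

/-- terms of the Euler-type series -/
noncomputable def gg (n j : ℕ) : PowerSeries ℚ :=
  X ^ (T j + n * j) * ((-1 : PowerSeries ℚ) ^ j * (qPoch j)⁻¹)

lemma le_exp_gg (n : ℕ) : ∀ j, j ≤ T j + n * j := fun j => le_trans (le_T j) (Nat.le_add_right _ _)

noncomputable def F (n : ℕ) : PowerSeries ℚ :=
  PowerSeries.mk fun N => ∑ j ∈ range (N + 1), coeff (R := ℚ) N (gg n j)

lemma coeff_F (n N : ℕ) {M : ℕ} (hM : N < M) :
    coeff (R := ℚ) N (F n) = ∑ j ∈ range M, coeff (R := ℚ) N (gg n j) := by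
  rw [F, coeff_mk]
  exact (pad (le_exp_gg n) hM).symm

lemma gg_zero (n : ℕ) : gg n 0 = 1 := by
  simp [gg, T_zero, inv_qPoch_zero]

lemma gg_step (n k : ℕ) : gg n (k+1) - gg (n+1) (k+1) = -(X ^ (n+1) * gg (n+1) k) := by
  have h1 : T (k+1) + n * (k+1) = (T k + (n+1) * k) + (n+1) := by
    rw [T_succ]; ring
  have h2 : T (k+1) + (n+1) * (k+1) = (T (k+1) + n * (k+1)) + (k+1) := by ring
  rw [gg, gg, gg, h2, h1]
  have e1 : (X : PowerSeries ℚ) ^ (T k + (n+1) * k + (n+1) + (k+1))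
      = X ^ (T k + (n+1) * k + (n+1)) * X ^ (k+1) := pow_add _ _ _
  have e2 : (X : PowerSeries ℚ) ^ (T k + (n+1) * k + (n+1))
      = X ^ (n+1) * X ^ (T k + (n+1) * k) := by rw [← pow_add, Nat.add_comm]
  have e3 : (-1 : PowerSeries ℚ) ^ (k+1) = (-1) ^ k * -1 := pow_succ _ _
  rw [e1, e2, e3]
  have e4 : (qPoch (k+1))⁻¹ * (1 - X ^ (k+1)) = (qPoch k)⁻¹ := inv_succ k
  linear_combination (X ^ (n+1) * X ^ (T k + (n+1) * k) * ((-1 : PowerSeries ℚ) ^ k * -1)) * e4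

lemma Frec (n : ℕ) : F n = (1 - X ^ (n + 1)) * F (n + 1) := by
  ext N
  rw [sub_mul, one_mul, map_sub]
  rw [PowerSeries.coeff_X_pow_mul' (F (n+1)) (n+1) N]
  have key : coeff (R := ℚ) N (F n) - coeff (R := ℚ) N (F (n+1))
      = -(∑ k ∈ range N, coeff (R := ℚ) N (X ^ (n+1) * gg (n+1) k)) := by
    rw [coeff_F n N (Nat.lt_succ_self N), coeff_F (n+1) N (Nat.lt_succ_self N),
      ← Finset.sum_sub_distrib]
    rw [Finset.sum_range_succ']
    have h0 : coeff (R := ℚ) N (gg n 0) - coeff (R := ℚ) N (gg (n+1) 0) = 0 := by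
      rw [gg_zero, gg_zero]; ring
    rw [h0, add_zero, ← Finset.sum_neg_distrib]
    apply Finset.sum_congr rfl
    intro k _
    rw [← map_sub, gg_step, map_neg]
  have key2 : (∑ k ∈ range N, coeff (R := ℚ) N (X ^ (n+1) * gg (n+1) k))
      = if n + 1 ≤ N then coeff (R := ℚ) (N - (n+1)) (F (n+1)) else 0 := by
    by_cases hle : n + 1 ≤ N
    · rw [if_pos hle]
      have : ∀ k, coeff (R := ℚ) N (X ^ (n+1) * gg (n+1) k) = coeff (R := ℚ) (N - (n+1)) (gg (n+1) k) := by
        intro k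
        rw [PowerSeries.coeff_X_pow_mul' (gg (n+1) k) (n+1) N, if_pos hle]
      rw [Finset.sum_congr rfl (fun k _ => this k)]
      rw [coeff_F (n+1) (N - (n+1)) (show N - (n+1) < N by omega)]
    · rw [if_neg hle]
      apply Finset.sum_eq_zero
      intro k _
      rw [PowerSeries.coeff_X_pow_mul' (gg (n+1) k) (n+1) N, if_neg hle]
  rw [key2] at key
  linarith [key]

lemma Ftail {k m : ℕ} (hk : k ≤ m) : coeff (R := ℚ) k (F m) = coeff (R := ℚ) k (1 : PowerSeries ℚ) := by
  rw [coeff_F m k (Nat.lt_succ_self k), Finset.sum_range_succ']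
  have hz : ∀ i ∈ range k, coeff (R := ℚ) k (gg m (i+1)) = 0 := by
    intro i _
    rw [gg]
    apply coeff_X_pow_mul_eq_zero
    have h1 : 1 ≤ T (i+1) := le_trans (by omega) (le_T (i+1))
    have h2 : m ≤ m * (i+1) := Nat.le_mul_of_pos_right m (by omega)
    omega
  rw [Finset.sum_eq_zero hz, zero_add, gg_zero]

lemma qPF (n m : ℕ) (h : n ≤ m) : qPoch n * F n = qPoch m * F m := by
  induction m with
  | zero => interval_cases n; rfl
  | succ m ih =>
    rcases Nat.lt_or_ge n (m+1) with hlt | hge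
    · rw [ih (by omega), Frec m, qPoch_succ]; ring
    · have : n = m + 1 := by omega
      rw [this]

-- topology glue
lemma apply_eq_coeff (P : PowerSeries ℚ) (d : Unit →₀ ℕ) : P d = coeff (R := ℚ) (d ()) P := by
  have hd : d = Finsupp.single () (d ()) := by
    ext
    rw [Finsupp.single_eq_same]
  conv_lhs => rw [hd]
  rfl

lemma tail_coeff {m k : ℕ} (hk : k ≤ m) :
    ∀ t : Finset ℕ, (∀ i ∈ t, m ≤ i) →
      coeff (R := ℚ) k (∏ i ∈ t, (1 - (X : PowerSeries ℚ) ^ (i+1))) = coeff (R := ℚ) k 1 := by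
  intro t
  induction t using Finset.induction_on with
  | empty => intro _; rfl
  | @insert a s ha ih =>
    intro h
    rw [Finset.prod_insert ha, sub_mul, one_mul, map_sub,
      ih (fun i hi => h i (Finset.mem_insert_of_mem hi))]
    have hz : coeff (R := ℚ) k (X ^ (a+1) * ∏ i ∈ s, (1 - (X : PowerSeries ℚ) ^ (i+1))) = 0 :=
      coeff_X_pow_mul_eq_zero (by have := h a (Finset.mem_insert_self a s); omega) _
    rw [hz, sub_zero]

lemma prod_coeff {s : Finset ℕ} {m k : ℕ} (h : range m ⊆ s) (hk : k ≤ m) :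
    coeff (R := ℚ) k (∏ i ∈ s, (1 - (X : PowerSeries ℚ) ^ (i+1))) = coeff (R := ℚ) k (qPoch m) := by
  have hsplit : (∏ i ∈ s, (1 - (X : PowerSeries ℚ) ^ (i+1)))
      = qPoch m * ∏ i ∈ s \ range m, (1 - (X : PowerSeries ℚ) ^ (i+1)) := by
    rw [qPoch, mul_comm, Finset.prod_sdiff h]
  rw [hsplit,
    coeff_mul_congr (fun k' hk' => tail_coeff (le_trans hk' hk) _ (fun i hi => by
      have hmem := (Finset.mem_sdiff.mp hi).2
      rw [Finset.mem_range, not_lt] at hmem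
      exact hmem)) (qPoch m), mul_one]

noncomputable def EE : PowerSeries ℚ := PowerSeries.mk fun N => coeff (R := ℚ) N (qPoch (N+1))

lemma hasProd_E : HasProd (fun i => 1 - (X : PowerSeries ℚ) ^ (i+1)) EE := by
  refine tendsto_pi_nhds.mpr fun d => ?_
  refine Filter.Tendsto.congr' ?_ tendsto_const_nhds
  filter_upwards [eventually_ge_atTop (range (d () + 1))] with s hs
  rw [apply_eq_coeff EE d, apply_eq_coeff (∏ i ∈ s, (1 - (X : PowerSeries ℚ) ^ (i+1))) d,
    EE, coeff_mk]
  exact (prod_coeff (Finset.le_iff_subset.mp hs) (Nat.le_succ _)).symm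

lemma E_eq_EE : E = EE := hasProd_E.tprod_eq

lemma coeff_E {k m : ℕ} (h : k < m) : coeff (R := ℚ) k E = coeff (R := ℚ) k (qPoch m) := by
  rw [E_eq_EE, EE, coeff_mk]
  have hq : qPoch m = ∏ i ∈ range m, (1 - (X : PowerSeries ℚ) ^ (i+1)) := rfl
  rw [hq]
  exact (prod_coeff (Finset.range_subset_range.mpr h) (Nat.le_succ k)).symm

lemma E_eq (n : ℕ) : E = qPoch n * F n := by
  ext N
  have hm : N < max (N+1) n := lt_of_lt_of_le (Nat.lt_succ_self N) (le_max_left _ _)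
  rw [coeff_E hm, qPF n (max (N+1) n) (le_max_right _ _),
    coeff_mul_congr (fun k hk => Ftail (by omega)) (qPoch (max (N+1) n)), mul_one]

lemma hasSum_of_order {e : ℕ → ℕ} (he : ∀ n, n ≤ e n) (c : ℕ → PowerSeries ℚ) :
    HasSum (fun n => X ^ (e n) * c n)
      (PowerSeries.mk fun N => ∑ j ∈ range (N+1), coeff (R := ℚ) N (X ^ (e j) * c j)) := by
  refine tendsto_pi_nhds.mpr fun d => ?_
  refine Filter.Tendsto.congr' ?_ tendsto_const_nhds
  filter_upwards [eventually_ge_atTop (range (d () + 1))] with s hs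
  have hsa : (∑ b ∈ s, X ^ e b * c b : PowerSeries ℚ) d = ∑ b ∈ s, (X ^ e b * c b : PowerSeries ℚ) d :=
    Finset.sum_apply _ _ _
  rw [apply_eq_coeff (PowerSeries.mk fun N => ∑ j ∈ range (N+1), coeff (R := ℚ) N (X ^ (e j) * c j)) d,
    coeff_mk, hsa,
    Finset.sum_congr rfl (fun j _ => apply_eq_coeff (X ^ (e j) * c j) d)]
  refine Finset.sum_subset (Finset.le_iff_subset.mp hs) ?_
  intro j _ hj
  rw [Finset.mem_range, not_lt] at hj
  exact coeff_X_pow_mul_eq_zero (Nat.lt_of_lt_of_le (Nat.lt_of_succ_le hj) (he j)) _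

noncomputable def wfun (n j : ℕ) : PowerSeries ℚ :=
  (X ^ (n * (n + 1)) * (qPoch n)⁻¹) * gg n j

lemma w_eq (n j : ℕ) : wfun n j
    = X ^ (n * (n + 1) + (T j + n * j)) * ((qPoch n)⁻¹ * ((-1 : PowerSeries ℚ) ^ j * (qPoch j)⁻¹)) := by
  rw [wfun, gg, pow_add]; ring

lemma coeff_w_zero {N n j : ℕ} (h : N < n + j) : coeff (R := ℚ) N (wfun n j) = 0 := by
  rw [w_eq]
  apply coeff_X_pow_mul_eq_zero
  have h1 : n ≤ n * (n + 1) := Nat.le_mul_of_pos_right n (by omega)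
  have h2 : j ≤ T j := le_T j
  omega

lemma inner_sum (m : ℕ) :
    ∑ n ∈ range (m + 1), wfun n (m - n) = X ^ (T m) * (-1 : PowerSeries ℚ) ^ m := by
  have hterm : ∀ n ∈ range (m + 1), wfun n (m - n)
      = X ^ (T m) * ((-1 : PowerSeries ℚ) ^ m *
          ((-1 : PowerSeries ℚ) ^ n * (X ^ (T n) * ((qPoch n)⁻¹ * (qPoch (m - n))⁻¹)))) := by
    intro n hn
    rw [Finset.mem_range] at hn
    rw [wfun, gg]
    have hexp : (X : PowerSeries ℚ) ^ (n * (n + 1)) * X ^ (T (m - n) + n * (m - n))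
        = X ^ (T m) * X ^ (T n) := by
      rw [← pow_add, ← pow_add, exp_key (by omega)]
    have hsign : (-1 : PowerSeries ℚ) ^ (m - n) = (-1) ^ m * (-1) ^ n := by
      have h1 : (-1 : PowerSeries ℚ) ^ (m - n) * (-1) ^ n = (-1) ^ m := by
        rw [← pow_add]; congr 1; omega
      have h2 : (-1 : PowerSeries ℚ) ^ n * (-1) ^ n = 1 := by
        rw [← pow_add, ← two_mul, pow_mul]; norm_num
      calc (-1 : PowerSeries ℚ) ^ (m - n) = (-1) ^ (m - n) * ((-1) ^ n * (-1) ^ n) := by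
            rw [h2, mul_one]
        _ = ((-1) ^ (m - n) * (-1) ^ n) * (-1) ^ n := by ring
        _ = (-1) ^ m * (-1) ^ n := by rw [h1]
    calc (X ^ (n * (n + 1)) * (qPoch n)⁻¹) *
            (X ^ (T (m - n) + n * (m - n)) * ((-1 : PowerSeries ℚ) ^ (m - n) * (qPoch (m - n))⁻¹))
        = (X ^ (n * (n + 1)) * X ^ (T (m - n) + n * (m - n))) *
            ((-1 : PowerSeries ℚ) ^ (m - n) * ((qPoch n)⁻¹ * (qPoch (m - n))⁻¹)) := by ring
      _ = (X ^ (T m) * X ^ (T n)) *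
            (((-1 : PowerSeries ℚ) ^ m * (-1) ^ n) * ((qPoch n)⁻¹ * (qPoch (m - n))⁻¹)) := by
          rw [hexp, hsign]
      _ = _ := by ring
  rw [Finset.sum_congr rfl hterm, ← Finset.mul_sum, ← Finset.mul_sum, gauss m, mul_one]

lemma reindex (N : ℕ) :
    ∑ n ∈ range (N + 1), ∑ j ∈ range (N + 1), coeff (R := ℚ) N (wfun n j)
      = ∑ m ∈ range (N + 1), ∑ n ∈ range (m + 1), coeff (R := ℚ) N (wfun n (m - n)) := by
  classical
  have hL : ∑ p ∈ range (N + 1) ×ˢ range (N + 1), coeff (R := ℚ) N (wfun p.1 p.2)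
      = ∑ n ∈ range (N + 1), ∑ j ∈ range (N + 1), coeff (R := ℚ) N (wfun n j) :=
    Finset.sum_product' _ _ (fun n j => coeff (R := ℚ) N (wfun n j))
  rw [← hL]
  have hR : ∑ m ∈ range (N + 1), ∑ n ∈ range (m + 1), coeff (R := ℚ) N (wfun n (m - n))
      = ∑ q ∈ (range (N + 1)).sigma (fun m => range (m + 1)),
          coeff (R := ℚ) N (wfun q.2 (q.1 - q.2)) :=
    Finset.sum_sigma' (range (N + 1)) (fun m => range (m + 1))
      (fun m n => coeff (R := ℚ) N (wfun n (m - n)))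
  rw [hR]
  rw [← Finset.sum_filter_of_ne (p := fun p : ℕ × ℕ => p.1 + p.2 ≤ N)
    (fun p _ hp => by_contra fun hc => hp (coeff_w_zero (by omega)))]
  refine Finset.sum_nbij' (fun p => ⟨p.1 + p.2, p.1⟩) (fun q => (q.2, q.1 - q.2)) ?_ ?_ ?_ ?_ ?_
  · intro p hp
    simp only [Finset.mem_filter, Finset.mem_product, Finset.mem_range] at hp
    simp only [Finset.mem_sigma, Finset.mem_range]
    omega
  · intro q hq
    simp only [Finset.mem_sigma, Finset.mem_range] at hq
    simp only [Finset.mem_filter, Finset.mem_product, Finset.mem_range]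
    omega
  · intro p hp
    simp only [Finset.mem_filter, Finset.mem_product, Finset.mem_range] at hp
    simp only [Nat.add_sub_cancel_left]
  · intro q hq
    simp only [Finset.mem_sigma, Finset.mem_range] at hq
    have : q.2 + (q.1 - q.2) = q.1 := by omega
    exact Sigma.ext this (by simp)
  · intro p hp
    simp only [Nat.add_sub_cancel_left]

noncomputable def TT : PowerSeries ℚ :=
  PowerSeries.mk fun N => ∑ m ∈ range (N + 1), coeff (R := ℚ) N (X ^ (T m) * (-1 : PowerSeries ℚ) ^ m)

noncomputable def SS : PowerSeries ℚ :=
  PowerSeries.mk fun N => ∑ n ∈ range (N + 1), coeff (R := ℚ) N (X ^ (n * (n + 1)) * ((qPoch n) ^ 2)⁻¹)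

lemma Eterm (n : ℕ) : E * (X ^ (n * (n + 1)) * ((qPoch n) ^ 2)⁻¹)
    = (X ^ (n * (n + 1)) * (qPoch n)⁻¹) * F n := by
  rw [E_eq n, inv_sq n]
  linear_combination (X ^ (n * (n + 1)) * (qPoch n)⁻¹ * F n) * qPoch_mul_inv n

lemma main_identity : E * SS = TT := by
  ext N
  have he2 : ∀ n : ℕ, n ≤ n * (n + 1) := fun n => Nat.le_mul_of_pos_right n (by omega)
  -- replace SS by its partial sum
  have h1 : coeff (R := ℚ) N (E * SS)
      = coeff (R := ℚ) N (E * ∑ n ∈ range (N + 1), X ^ (n * (n + 1)) * ((qPoch n) ^ 2)⁻¹) := by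
    apply coeff_mul_congr
    intro k hk
    rw [SS, coeff_mk, map_sum]
    exact (pad he2 (show k < N + 1 by omega)).symm
  rw [h1, Finset.mul_sum, map_sum]
  have h2 : ∀ n ∈ range (N + 1), coeff (R := ℚ) N (E * (X ^ (n * (n + 1)) * ((qPoch n) ^ 2)⁻¹))
      = ∑ j ∈ range (N + 1), coeff (R := ℚ) N (wfun n j) := by
    intro n _
    rw [Eterm n,
      coeff_mul_congr (B' := ∑ j ∈ range (N + 1), gg n j)
        (fun k hk => by rw [map_sum]; exact coeff_F n k (by omega))
        (X ^ (n * (n + 1)) * (qPoch n)⁻¹),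
      Finset.mul_sum, map_sum]
    rfl
  rw [Finset.sum_congr rfl h2, reindex N, TT, coeff_mk]
  apply Finset.sum_congr rfl
  intro m _
  rw [← inner_sum m, map_sum]

lemma cc_E_ne : constantCoeff (R := ℚ) E ≠ 0 := by
  have h := coeff_E (k := 0) (m := 1) (by omega)
  rw [coeff_zero_eq_constantCoeff, constantCoeff_qPoch] at h
  rw [h]; norm_num

end StmtAux


open StmtAux in
theorem StmtAux.final :
    E⁻¹ * (∑' n : ℕ, ((-1 : ℚ) ^ n) • (X : PowerSeries ℚ) ^ (n * (n + 1) / 2)) =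
      ∑' n : ℕ, (X : PowerSeries ℚ) ^ (n * (n + 1)) * ((qPoch n) ^ 2)⁻¹ := by
  have hfun : (fun n : ℕ => ((-1 : ℚ) ^ n) • (X : PowerSeries ℚ) ^ (n * (n + 1) / 2))
      = fun n => X ^ (T n) * ((-1 : PowerSeries ℚ) ^ n) := by
    funext n
    rw [PowerSeries.smul_eq_C_mul, map_pow, map_neg, map_one]
    have : T n = n * (n + 1) / 2 := rfl
    rw [this]
    ring
  have hTheta : (∑' n : ℕ, ((-1 : ℚ) ^ n) • (X : PowerSeries ℚ) ^ (n * (n + 1) / 2)) = TT := by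
    rw [hfun]
    exact (hasSum_of_order (fun n => le_T n) (fun n => (-1 : PowerSeries ℚ) ^ n)).tsum_eq
  have hS : (∑' n : ℕ, (X : PowerSeries ℚ) ^ (n * (n + 1)) * ((qPoch n) ^ 2)⁻¹) = SS :=
    (hasSum_of_order (fun n => Nat.le_mul_of_pos_right n (by omega))
      (fun n => ((qPoch n) ^ 2)⁻¹)).tsum_eq
  rw [hTheta, hS, ← main_identity, ← mul_assoc, PowerSeries.inv_mul_cancel E cc_E_ne, one_mul]


theorem stmt11 :
    E⁻¹ * (∑' n : ℕ, ((-1 : ℚ) ^ n) • (X : PowerSeries ℚ) ^ (n * (n + 1) / 2)) =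
      ∑' n : ℕ, (X : PowerSeries ℚ) ^ (n * (n + 1)) * ((qPoch n) ^ 2)⁻¹ := StmtAux.final
end
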